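/- arXiv:1505.06682 — 5 statements merged into one kernel-verified Lean document; each statement's English description precedes it below -/
import Mathlib

section
/- Let A be a C*-algebra, H₁, H₂ Hilbert spaces, and π_j : A → B(H_j) *-homomorphisms such that every bounded intertwiner from π₁ to π₂ is zero and every bounded intertwiner from π₂ to π₁ is zero. Then the orthogonal projection of H₁ ⊕ H₂ onto H₁ lies in the strong operator topology closure of (π₁ ⊕ π₂)(A) in B(H₁ ⊕ H₂). -/
set_option linter.unusedSectionVars false
set_option linter.unreachableTactic false
set_option linter.unusedTactic false
set_option maxHeartbeats 1000000

open ContinuousLinearMap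

noncomputable section Stmt6Aux

variable {A : Type*} [NormedRing A] [StarRing A] [CStarRing A] [NormedAlgebra ℂ A]
    {H₁ H₂ : Type*}
    [NormedAddCommGroup H₁] [InnerProductSpace ℂ H₁] [CompleteSpace H₁]
    [NormedAddCommGroup H₂] [InnerProductSpace ℂ H₂] [CompleteSpace H₂]

local notation "E" => WithLp 2 (H₁ × H₂)
local notation "⟪" x ", " y "⟫" => inner (𝕜 := ℂ) x y

/-- prodMap, conjugated to act on the `L²` product. -/
def prodE (S₁ : H₁ →L[ℂ] H₁) (S₂ : H₂ →L[ℂ] H₂) : E →L[ℂ] E :=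
  ((WithLp.prodContinuousLinearEquiv 2 ℂ H₁ H₂).symm.toContinuousLinearMap.comp
    ((S₁.prodMap S₂).comp (WithLp.prodContinuousLinearEquiv 2 ℂ H₁ H₂).toContinuousLinearMap))

lemma prodE_fst (S₁ : H₁ →L[ℂ] H₁) (S₂ : H₂ →L[ℂ] H₂) (x : E) :
    (prodE S₁ S₂ x).fst = S₁ x.fst := rfl

lemma prodE_snd (S₁ : H₁ →L[ℂ] H₁) (S₂ : H₂ →L[ℂ] H₂) (x : E) :
    (prodE S₁ S₂ x).snd = S₂ x.snd := rfl

lemma E_ext {x y : WithLp 2 (H₁ × H₂)} (h1 : x.fst = y.fst) (h2 : x.snd = y.snd) : x = y :=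
  WithLp.ofLp_injective 2 (Prod.ext h1 h2)

lemma prod_norm_le' (z : WithLp 2 (H₁ × H₂)) : ‖WithLp.equiv 2 (H₁ × H₂) z‖ ≤ ‖z‖ := by
  have h := WithLp.prod_norm_sq_eq_of_L2 z
  rw [Prod.norm_def]
  have h1 : ‖z.fst‖ ≤ ‖z‖ := by
    nlinarith [norm_nonneg z.fst, norm_nonneg z.snd, norm_nonneg z, sq_nonneg ‖z.snd‖]
  have h2 : ‖z.snd‖ ≤ ‖z‖ := by
    nlinarith [norm_nonneg z.fst, norm_nonneg z.snd, norm_nonneg z]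
  exact max_le h1 h2

variable (π₁ : A →⋆ₐ[ℂ] (H₁ →L[ℂ] H₁)) (π₂ : A →⋆ₐ[ℂ] (H₂ →L[ℂ] H₂))

/-- The direct sum representation, acting on the `L²` product. -/
def pE (a : A) : E →L[ℂ] E := prodE (π₁ a) (π₂ a)

lemma pE_fst (a : A) (x : E) : (pE π₁ π₂ a x).fst = π₁ a x.fst := rfl
lemma pE_snd (a : A) (x : E) : (pE π₁ π₂ a x).snd = π₂ a x.snd := rfl

lemma pE_one (x : E) : pE π₁ π₂ 1 x = x := by
  refine E_ext ?_ ?_ <;> simp [pE_fst, pE_snd, map_one]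

lemma pE_mul (a b : A) (x : E) : pE π₁ π₂ (a * b) x = pE π₁ π₂ a (pE π₁ π₂ b x) := by
  refine E_ext ?_ ?_ <;> simp [pE_fst, pE_snd, map_mul, ContinuousLinearMap.mul_apply]

lemma pE_add (a b : A) (x : E) : pE π₁ π₂ (a + b) x = pE π₁ π₂ a x + pE π₁ π₂ b x := by
  refine E_ext ?_ ?_ <;>
    simp [pE_fst, pE_snd, WithLp.add_fst, WithLp.add_snd, map_add, ContinuousLinearMap.add_apply]

lemma pE_smul (c : ℂ) (a : A) (x : E) : pE π₁ π₂ (c • a) x = c • pE π₁ π₂ a x := by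
  refine E_ext ?_ ?_ <;>
    simp [pE_fst, pE_snd, WithLp.smul_fst, WithLp.smul_snd, map_smul,
      ContinuousLinearMap.smul_apply]

lemma pE_inner (a : A) (x y : E) : ⟪pE π₁ π₂ a x, y⟫ = ⟪x, pE π₁ π₂ (star a) y⟫ := by
  simp only [WithLp.prod_inner_apply, pE_fst, pE_snd, map_star,
    ContinuousLinearMap.star_eq_adjoint]
  change inner ℂ (π₁ a x.fst) y.fst + inner ℂ (π₂ a x.snd) y.snd =
    inner ℂ x.fst (π₁ (star a) y.fst) + inner ℂ x.snd (π₂ (star a) y.snd)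
  rw [map_star, map_star, ContinuousLinearMap.star_eq_adjoint,
    ContinuousLinearMap.star_eq_adjoint]
  rw [ContinuousLinearMap.adjoint_inner_right, ContinuousLinearMap.adjoint_inner_right]

/-- The projection onto the first factor, on the `L²` product. -/
def Pe : E →L[ℂ] E := prodE (ContinuousLinearMap.id ℂ H₁) 0

lemma Pe_fst (x : E) : (Pe (H₁ := H₁) (H₂ := H₂) x).fst = x.fst := rfl
lemma Pe_snd (x : E) : (Pe (H₁ := H₁) (H₂ := H₂) x).snd = 0 := rfl

/-- inclusion of `H₁`. -/
def inl' : H₁ →L[ℂ] E :=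
  (WithLp.prodContinuousLinearEquiv 2 ℂ H₁ H₂).symm.toContinuousLinearMap.comp (inl ℂ H₁ H₂)

/-- inclusion of `H₂`. -/
def inr' : H₂ →L[ℂ] E :=
  (WithLp.prodContinuousLinearEquiv 2 ℂ H₁ H₂).symm.toContinuousLinearMap.comp (inr ℂ H₁ H₂)

lemma inl'_fst (x : H₁) : (inl' (H₂ := H₂) x).fst = x := rfl
lemma inl'_snd (x : H₁) : (inl' (H₂ := H₂) x).snd = 0 := rfl
lemma inr'_fst (x : H₂) : (inr' (H₁ := H₁) x).fst = 0 := rfl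
lemma inr'_snd (x : H₂) : (inr' (H₁ := H₁) x).snd = x := rfl

lemma decomp_E (x : E) : x = inl' x.fst + inr' x.snd := by
  refine E_ext ?_ ?_ <;> simp [WithLp.add_fst, WithLp.add_snd, inl'_fst, inl'_snd,
    inr'_fst, inr'_snd]

/-- Any operator commuting with the direct sum representation commutes with `Pe`,
by disjointness. -/
lemma comm_Pe
    (h₁₂ : ∀ T : H₁ →L[ℂ] H₂, (∀ a : A, T.comp (π₁ a) = (π₂ a).comp T) → T = 0)
    (h₂₁ : ∀ S : H₂ →L[ℂ] H₁, (∀ a : A, S.comp (π₂ a) = (π₁ a).comp S) → S = 0)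
    (q : E →L[ℂ] E) (hq : ∀ (a : A) (x : E), q (pE π₁ π₂ a x) = pE π₁ π₂ a (q x)) :
    ∀ x : E, q (Pe x) = Pe (q x) := by
  have hinl : ∀ (a : A) (x : H₁), pE π₁ π₂ a (inl' x) = inl' (π₁ a x) := by
    intro a x
    refine E_ext ?_ ?_ <;> simp [pE_fst, pE_snd, inl'_fst, inl'_snd]
  have hinr : ∀ (a : A) (x : H₂), pE π₁ π₂ a (inr' x) = inr' (π₂ a x) := by
    intro a x
    refine E_ext ?_ ?_ <;> simp [pE_fst, pE_snd, inr'_fst, inr'_snd]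
  have hT : ((snd ℂ H₁ H₂).comp
      ((WithLp.prodContinuousLinearEquiv 2 ℂ H₁ H₂).toContinuousLinearMap.comp
        (q.comp inl'))) = 0 := by
    apply h₁₂
    intro a
    ext x
    simp only [ContinuousLinearMap.comp_apply, ContinuousLinearEquiv.coe_coe]
    have : q (inl' (π₁ a x)) = pE π₁ π₂ a (q (inl' x)) := by rw [← hinl, hq]
    calc ((WithLp.prodContinuousLinearEquiv 2 ℂ H₁ H₂) (q (inl' (π₁ a x)))).snd
        = (q (inl' (π₁ a x))).snd := rfl
      _ = (pE π₁ π₂ a (q (inl' x))).snd := by rw [this]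
      _ = π₂ a (q (inl' x)).snd := rfl
  have hS : ((fst ℂ H₁ H₂).comp
      ((WithLp.prodContinuousLinearEquiv 2 ℂ H₁ H₂).toContinuousLinearMap.comp
        (q.comp inr'))) = 0 := by
    apply h₂₁
    intro a
    ext x
    simp only [ContinuousLinearMap.comp_apply, ContinuousLinearEquiv.coe_coe]
    have : q (inr' (π₂ a x)) = pE π₁ π₂ a (q (inr' x)) := by rw [← hinr, hq]
    calc ((WithLp.prodContinuousLinearEquiv 2 ℂ H₁ H₂) (q (inr' (π₂ a x)))).fst
        = (q (inr' (π₂ a x))).fst := rfl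
      _ = (pE π₁ π₂ a (q (inr' x))).fst := by rw [this]
      _ = π₁ a (q (inr' x)).fst := rfl
  have hTz : ∀ x : H₁, (q (inl' x)).snd = 0 := by
    intro x
    have := congrFun (congrArg DFunLike.coe hT) x
    simpa using this
  have hSz : ∀ x : H₂, (q (inr' x)).fst = 0 := by
    intro x
    have := congrFun (congrArg DFunLike.coe hS) x
    simpa using this
  intro x
  have hPx : Pe x = inl' x.fst := by
    refine E_ext ?_ ?_ <;> simp [Pe_fst, Pe_snd, inl'_fst, inl'_snd]
  have hx : q x = q (inl' x.fst) + q (inr' x.snd) := by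
    conv_lhs => rw [decomp_E x]
    rw [map_add]
  refine E_ext ?_ ?_
  · rw [hPx, Pe_fst, hx, WithLp.add_fst, hSz, add_zero]
  · rw [hPx, Pe_snd, hTz]


instance piLp2CompleteSpace {ι : Type*} [Fintype ι] {β : ι → Type*}
    [∀ i, NormedAddCommGroup (β i)] [∀ i, CompleteSpace (β i)] :
    CompleteSpace (PiLp 2 β) :=
  inferInstance

/-- The `n`-fold `L²` power of the `L²` product. -/
abbrev HnSp (H₁ H₂ : Type*) [NormedAddCommGroup H₁] [NormedAddCommGroup H₂] (n : ℕ) :=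
  PiLp 2 (fun _ : Fin n => WithLp 2 (H₁ × H₂))

/-- componentwise action -/
def liftn (n : ℕ) (S : E →L[ℂ] E) : HnSp H₁ H₂ n →L[ℂ] HnSp H₁ H₂ n :=
  (PiLp.continuousLinearEquiv 2 ℂ (fun _ : Fin n => E)).symm.toContinuousLinearMap.comp
    (ContinuousLinearMap.pi fun i => S.comp (PiLp.proj 2 (fun _ : Fin n => E) i))

lemma liftn_apply {n : ℕ} (S : E →L[ℂ] E) (x : HnSp H₁ H₂ n) (i : Fin n) :
    (liftn n S x) i = S (x i) := rfl

/-- insertion into the `j`-th coordinate -/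
def singleL (n : ℕ) (j : Fin n) : E →L[ℂ] HnSp H₁ H₂ n :=
  (PiLp.continuousLinearEquiv 2 ℂ (fun _ : Fin n => E)).symm.toContinuousLinearMap.comp
    (ContinuousLinearMap.pi fun i => if i = j then ContinuousLinearMap.id ℂ E else 0)

lemma singleL_apply {n : ℕ} (j : Fin n) (x : E) (i : Fin n) :
    (singleL n j x) i = if i = j then x else 0 := by
  show (if i = j then ContinuousLinearMap.id ℂ E else 0) x = _
  split <;> rfl

lemma sum_singleL {n : ℕ} (x : HnSp H₁ H₂ n) : ∑ j, singleL n j (x j) = x := by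
  apply PiLp.ext
  intro i
  show (PiLp.proj (𝕜 := ℂ) 2 (fun _ : Fin n => E) i) (∑ j, singleL n j (x j)) = x i
  rw [map_sum]
  simp only [PiLp.proj_apply, singleL_apply]
  simp

lemma liftn_singleL {n : ℕ} (S : E →L[ℂ] E) (j : Fin n) (x : E) :
    liftn n S (singleL n j x) = singleL n j (S x) := by
  apply PiLp.ext
  intro i
  rw [liftn_apply, singleL_apply, singleL_apply]
  split <;> simp

lemma liftn_inner {n : ℕ} (S T : E →L[ℂ] E)
    (h : ∀ x y : E, inner (𝕜 := ℂ) (S x) y = inner (𝕜 := ℂ) x (T y)) (x y : HnSp H₁ H₂ n) :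
    inner (𝕜 := ℂ) (liftn n S x) y = inner (𝕜 := ℂ) x (liftn n T y) := by
  rw [PiLp.inner_apply, PiLp.inner_apply]
  exact Finset.sum_congr rfl fun i _ => by rw [liftn_apply, liftn_apply, h]

lemma norm_apply_le {n : ℕ} (x : HnSp H₁ H₂ n) (i : Fin n) : ‖x i‖ ≤ ‖x‖ := by
  have h := PiLp.norm_sq_eq_of_L2 (fun _ : Fin n => E) x
  have h2 : ‖x i‖ ^ 2 ≤ ‖x‖ ^ 2 := by
    rw [h]
    exact Finset.single_le_sum (f := fun j => ‖x j‖ ^ 2) (fun j _ => sq_nonneg _)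
      (Finset.mem_univ i)
  nlinarith [norm_nonneg (x i), norm_nonneg x]

end Stmt6Aux

set_option synthInstance.maxHeartbeats 1000000 in
/-- If `π₁`, `π₂` are disjoint representations of a C*-algebra (no nonzero bounded
intertwiners in either direction), then the orthogonal projection of `H₁ ⊕ H₂` onto `H₁`
lies in the strong-operator-topology closure of `(π₁ ⊕ π₂)(A)`: it can be approximated
on any finite set of vectors by operators `(π₁ ⊕ π₂)(a)`. -/
theorem stmt6 {A : Type*} [NormedRing A] [StarRing A] [CStarRing A] [NormedAlgebra ℂ A]
    {H₁ H₂ : Type*}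
    [NormedAddCommGroup H₁] [InnerProductSpace ℂ H₁] [CompleteSpace H₁]
    [NormedAddCommGroup H₂] [InnerProductSpace ℂ H₂] [CompleteSpace H₂]
    (π₁ : A →⋆ₐ[ℂ] (H₁ →L[ℂ] H₁)) (π₂ : A →⋆ₐ[ℂ] (H₂ →L[ℂ] H₂))
    (h₁₂ : ∀ T : H₁ →L[ℂ] H₂, (∀ a : A, T.comp (π₁ a) = (π₂ a).comp T) → T = 0)
    (h₂₁ : ∀ S : H₂ →L[ℂ] H₁, (∀ a : A, S.comp (π₂ a) = (π₁ a).comp S) → S = 0) :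
    ∀ ε > (0 : ℝ), ∀ (n : ℕ) (ξ : Fin n → H₁ × H₂), ∃ a : A,
      ∀ i, ‖((π₁ a).prodMap (π₂ a)) (ξ i) -
        ((ContinuousLinearMap.inl ℂ H₁ H₂).comp (ContinuousLinearMap.fst ℂ H₁ H₂)) (ξ i)‖
          < ε := by
  intro ε hε n ξ
  classical
  set ξ' : Fin n → WithLp 2 (H₁ × H₂) :=
    fun i => (WithLp.equiv 2 (H₁ × H₂)).symm (ξ i) with hξ'
  set L : A →ₗ[ℂ] HnSp H₁ H₂ n :=
    { toFun := fun a => (WithLp.equiv 2 (∀ _ : Fin n, WithLp 2 (H₁ × H₂))).symm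
        (fun i => pE π₁ π₂ a (ξ' i))
      map_add' := by
        intro a b
        rw [WithLp.equiv_symm_apply, ← WithLp.toLp_add]
        exact congrArg _ (funext fun i => pE_add π₁ π₂ a b (ξ' i))
      map_smul' := by
        intro c a
        rw [RingHom.id_apply, WithLp.equiv_symm_apply, ← WithLp.toLp_smul]
        congr 1
        funext i
        exact pE_smul π₁ π₂ c a (ξ' i) } with hL
  have hLapp : ∀ (a : A) (i : Fin n), (L a) i = pE π₁ π₂ a (ξ' i) := fun a i => rfl
  set K : Submodule ℂ (HnSp H₁ H₂ n) := (LinearMap.range L).topologicalClosure with hK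
  haveI hKcs : CompleteSpace K := by rw [hK]; infer_instance
  haveI hKop : K.HasOrthogonalProjection := Submodule.HasOrthogonalProjection.ofCompleteSpace K
  set Q : HnSp H₁ H₂ n →L[ℂ] HnSp H₁ H₂ n :=
    K.subtypeL.comp (K.orthogonalProjectionOnto) with hQ
  have hQmem : ∀ x, Q x ∈ K := fun x => by rw [hQ]; exact (K.orthogonalProjectionOnto x).2
  have hQorth : ∀ x, x - Q x ∈ Kᗮ := fun x => by
    rw [hQ]; exact K.sub_starProjection_mem_orthogonal x
  have hrange : ∀ b : A, L b ∈ K :=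
    fun b => Submodule.le_topologicalClosure _ (LinearMap.mem_range_self L b)
  have hLmul : ∀ a b : A, liftn n (pE π₁ π₂ a) (L b) = L (a * b) :=
    fun a b => PiLp.ext fun i => (pE_mul π₁ π₂ a b (ξ' i)).symm
  have hKinv : ∀ (a : A), ∀ x ∈ K, liftn n (pE π₁ π₂ a) x ∈ K := by
    intro a x hx
    rw [hK, ← SetLike.mem_coe, Submodule.topologicalClosure_coe] at hx ⊢
    refine map_mem_closure (liftn n (pE π₁ π₂ a)).continuous hx ?_
    intro y hy
    rw [SetLike.mem_coe] at hy
    obtain ⟨b, rfl⟩ := hy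
    rw [SetLike.mem_coe, hLmul]
    exact LinearMap.mem_range_self L (a * b)
  have hQcomm : ∀ (a : A) (x : HnSp H₁ H₂ n),
      Q (liftn n (pE π₁ π₂ a) x) = liftn n (pE π₁ π₂ a) (Q x) := by
    intro a x
    have h1 : liftn n (pE π₁ π₂ a) (Q x) ∈ K := hKinv a _ (hQmem x)
    have h2 : liftn n (pE π₁ π₂ a) x - liftn n (pE π₁ π₂ a) (Q x) ∈ Kᗮ := by
      rw [← map_sub]
      rw [Submodule.mem_orthogonal]
      intro u hu
      have heq : inner (𝕜 := ℂ) u (liftn n (pE π₁ π₂ a) (x - Q x))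
          = inner (𝕜 := ℂ) (liftn n (pE π₁ π₂ (star a)) u) (x - Q x) := by
        have := liftn_inner (pE π₁ π₂ (star a)) (pE π₁ π₂ a)
          (by simpa using pE_inner π₁ π₂ (star a)) u (x - Q x)
        exact this.symm
      rw [heq]
      exact Submodule.inner_right_of_mem_orthogonal (hKinv (star a) u hu) (hQorth x)
    rw [hQ]
    exact K.eq_starProjection_of_mem_orthogonal h1 h2
  have hq : ∀ (i j : Fin n) (z : WithLp 2 (H₁ × H₂)),
      PiLp.proj (𝕜 := ℂ) 2 (fun _ : Fin n => WithLp 2 (H₁ × H₂)) i (Q (singleL n j (Pe z)))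
        = Pe (PiLp.proj (𝕜 := ℂ) 2 (fun _ : Fin n => WithLp 2 (H₁ × H₂)) i
            (Q (singleL n j z))) := by
    intro i j
    have hcomm : ∀ (a : A) (z : WithLp 2 (H₁ × H₂)),
        ((PiLp.proj (𝕜 := ℂ) 2 (fun _ : Fin n => WithLp 2 (H₁ × H₂)) i).comp
          (Q.comp (singleL n j))) (pE π₁ π₂ a z)
          = pE π₁ π₂ a (((PiLp.proj (𝕜 := ℂ) 2 (fun _ : Fin n => WithLp 2 (H₁ × H₂)) i).comp
            (Q.comp (singleL n j))) z) := by
      intro a z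
      simp only [ContinuousLinearMap.comp_apply, PiLp.proj_apply]
      rw [← liftn_singleL (pE π₁ π₂ a) j z, hQcomm]
      exact liftn_apply (pE π₁ π₂ a) (Q (singleL n j z)) i
    exact comm_Pe π₁ π₂ h₁₂ h₂₁ _ hcomm
  have hQP : ∀ x : HnSp H₁ H₂ n, Q (liftn n Pe x) = liftn n Pe (Q x) := by
    intro x
    have hx1 : liftn n Pe x = ∑ j, singleL n j (Pe (x j)) := by
      conv_lhs => rw [← sum_singleL x]
      rw [map_sum]
      all_goals exact Finset.sum_congr rfl fun j _ => liftn_singleL Pe j (x j)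
    apply PiLp.ext
    intro i
    show PiLp.proj (𝕜 := ℂ) 2 (fun _ : Fin n => WithLp 2 (H₁ × H₂)) i (Q (liftn n Pe x))
      = PiLp.proj (𝕜 := ℂ) 2 (fun _ : Fin n => WithLp 2 (H₁ × H₂)) i (liftn n Pe (Q x))
    have hrhs : PiLp.proj (𝕜 := ℂ) 2 (fun _ : Fin n => WithLp 2 (H₁ × H₂)) i
        (liftn n Pe (Q x)) = Pe (PiLp.proj (𝕜 := ℂ) 2 (fun _ : Fin n => WithLp 2 (H₁ × H₂)) i
          (Q x)) := rfl
    rw [hrhs, hx1, map_sum, map_sum]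
    have hx2 : Q x = ∑ j, Q (singleL n j (x j)) := by
      conv_lhs => rw [← sum_singleL x]
      rw [map_sum]
    rw [hx2, map_sum, map_sum]
    rw [Finset.sum_congr rfl fun j _ => hq i j (x j)]
    all_goals exact (map_sum Pe _ _).symm
  -- conclusion
  have hξK : L 1 ∈ K := hrange 1
  have hQξ : Q (L 1) = L 1 := by rw [hQ]; exact K.starProjection_eq_self_iff.mpr hξK
  have hwK : liftn n Pe (L 1) ∈ K := by
    rw [← hQξ, ← hQP]
    exact hQmem _
  have hwcl : liftn n Pe (L 1) ∈ closure ((LinearMap.range L : Submodule ℂ _) : Set _) := by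
    rw [hK, ← SetLike.mem_coe, Submodule.topologicalClosure_coe] at hwK
    exact hwK
  rw [Metric.mem_closure_iff] at hwcl
  obtain ⟨y, hy, hdist⟩ := hwcl ε hε
  obtain ⟨a, rfl⟩ := hy
  refine ⟨a, fun i => ?_⟩
  have hnorm : ‖L a - liftn n Pe (L 1)‖ < ε := by
    rw [dist_eq_norm] at hdist
    rw [← norm_neg]
    simpa using hdist
  have hle1 : ‖(L a) i - (liftn n Pe (L 1)) i‖ ≤ ‖L a - liftn n Pe (L 1)‖ :=
    norm_apply_le (L a - liftn n Pe (L 1)) i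
  have hwi : (liftn n Pe (L 1)) i = Pe (ξ' i) := by
    show Pe ((L 1) i) = Pe (ξ' i)
    rw [hLapp, pE_one]
  have hgoal : ((π₁ a).prodMap (π₂ a)) (ξ i) -
      ((ContinuousLinearMap.inl ℂ H₁ H₂).comp (ContinuousLinearMap.fst ℂ H₁ H₂)) (ξ i)
      = WithLp.equiv 2 (H₁ × H₂) ((L a) i - (liftn n Pe (L 1)) i) := by
    rw [hwi, hLapp]
    apply Prod.ext
    · show π₁ a (ξ i).1 - (ξ i).1 = (pE π₁ π₂ a (ξ' i) - Pe (ξ' i)).fst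
      rw [WithLp.sub_fst, pE_fst, Pe_fst]
      rfl
    · show π₂ a (ξ i).2 - 0 = (pE π₁ π₂ a (ξ' i) - Pe (ξ' i)).snd
      rw [WithLp.sub_snd, pE_snd, Pe_snd]
      rfl
  calc ‖((π₁ a).prodMap (π₂ a)) (ξ i) -
      ((ContinuousLinearMap.inl ℂ H₁ H₂).comp (ContinuousLinearMap.fst ℂ H₁ H₂)) (ξ i)‖
      = ‖WithLp.equiv 2 (H₁ × H₂) ((L a) i - (liftn n Pe (L 1)) i)‖ := by rw [hgoal]
    _ ≤ ‖(L a) i - (liftn n Pe (L 1)) i‖ := prod_norm_le' _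
    _ ≤ ‖L a - liftn n Pe (L 1)‖ := hle1
    _ < ε := hnorm
end

section
/- Let (M,τ) be a tracial von Neumann algebra and N ⊆ M a diffuse von Neumann subalgebra. Let u ∈ M be a unitary such that u*Nu ∩ N is diffuse. Then every bounded N-N bimodular map T : L²(NuN) → L²(N) ⊗ L²(N^op) is zero, where L²(NuN) is the ‖·‖₂-closure of the linear span of {xuy : x,y ∈ N} in L²(M,τ). -/
open Filter MulOpposite

lemma aux_isom {F : Type*} [NormedAddCommGroup F] [InnerProductSpace ℂ F] [CompleteSpace F]
    {C : Type*} [Ring C] [StarRing C] [Algebra ℂ C]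
    (φ : C →⋆ₐ[ℂ] (F →L[ℂ] F)) {c : C} (hc : star c * c = 1) (x : F) :
    ‖φ c x‖ = ‖x‖ := by
  have h2 := ContinuousLinearMap.adjoint_inner_left (𝕜 := ℂ) (φ c) x (φ c x)
  rw [← ContinuousLinearMap.star_eq_adjoint, ← map_star φ c] at h2
  have h3 : φ (star c) (φ c x) = x := by
    have h4 : φ (star c) (φ c x) = (φ (star c) * φ c) x := rfl
    rw [h4, ← map_mul, hc, map_one, ContinuousLinearMap.one_apply]
  rw [h3] at h2
  rw [inner_self_eq_norm_sq_to_K, inner_self_eq_norm_sq_to_K] at h2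
  have e2 : ‖φ c x‖ ^ 2 = ‖x‖ ^ 2 := by exact_mod_cast h2.symm
  nlinarith [norm_nonneg (φ c x), norm_nonneg x]

lemma weak_ext {F : Type*} [NormedAddCommGroup F] [InnerProductSpace ℂ F]
    (U : ℕ → F →ₗ[ℂ] F) (hU : ∀ n x, ‖U n x‖ ≤ ‖x‖)
    (s : Set F) (hdense : (Submodule.span ℂ s).topologicalClosure = ⊤)
    (h0 : ∀ z ∈ s, ∀ z' ∈ s, Tendsto (fun n => (inner ℂ (U n z) z' : ℂ)) atTop (nhds 0))
    (ζ ζ' : F) : Tendsto (fun n => (inner ℂ (U n ζ) ζ' : ℂ)) atTop (nhds 0) := by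
  have hspan : ∀ z ∈ Submodule.span ℂ s, ∀ z' ∈ Submodule.span ℂ s,
      Tendsto (fun n => (inner ℂ (U n z) z' : ℂ)) atTop (nhds 0) := by
    intro z hz z' hz'
    induction hz, hz' using Submodule.span_induction₂ with
    | mem_mem x y hx hy => exact h0 x hx y hy
    | zero_left y hy => simpa using (tendsto_const_nhds : Tendsto (fun _ : ℕ => (0:ℂ)) atTop _)
    | zero_right x hx => simpa using (tendsto_const_nhds : Tendsto (fun _ : ℕ => (0:ℂ)) atTop _)
    | add_left x y z hx hy hz h1 h2 => simpa [map_add, inner_add_left] using h1.add h2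
    | add_right x y z hx hy hz h1 h2 => simpa [inner_add_right] using h1.add h2
    | smul_left r x y hx hy h => simpa [map_smul, inner_smul_left] using h.mul_const _
    | smul_right r x y hx hy h => simpa [inner_smul_right] using h.const_mul _
  rw [Metric.tendsto_atTop]
  intro ε hε
  have hCpos : (0:ℝ) < ‖ζ‖ + ‖ζ'‖ + 2 := by positivity
  set δ : ℝ := min 1 (ε / (2 * (‖ζ‖ + ‖ζ'‖ + 2))) with hδdef
  have hδpos : 0 < δ := lt_min one_pos (by positivity)
  have hδ1 : δ ≤ 1 := min_le_left _ _
  have hδ2 : δ ≤ ε / (2 * (‖ζ‖ + ‖ζ'‖ + 2)) := min_le_right _ _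
  have hζmem : ζ ∈ closure ((Submodule.span ℂ s : Submodule ℂ F) : Set F) := by
    rw [← Submodule.topologicalClosure_coe, hdense]; trivial
  have hζ'mem : ζ' ∈ closure ((Submodule.span ℂ s : Submodule ℂ F) : Set F) := by
    rw [← Submodule.topologicalClosure_coe, hdense]; trivial
  obtain ⟨z, hzmem, hzd⟩ := Metric.mem_closure_iff.mp hζmem δ hδpos
  obtain ⟨z', hz'mem, hz'd⟩ := Metric.mem_closure_iff.mp hζ'mem δ hδpos
  obtain ⟨N, hN⟩ := (Metric.tendsto_atTop.mp (hspan z hzmem z' hz'mem)) (ε/2) (by positivity)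
  refine ⟨N, fun n hn => ?_⟩
  have key : (inner ℂ (U n ζ) ζ' : ℂ)
      = inner ℂ (U n z) z' + inner ℂ (U n (ζ - z)) ζ' + inner ℂ (U n z) (ζ' - z') := by
    simp only [map_sub, inner_sub_left, inner_sub_right]
    ring
  have b1 : ‖(inner ℂ (U n (ζ - z)) ζ' : ℂ)‖ ≤ δ * ‖ζ'‖ := by
    calc ‖(inner ℂ (U n (ζ - z)) ζ' : ℂ)‖ ≤ ‖U n (ζ - z)‖ * ‖ζ'‖ := norm_inner_le_norm _ _
    _ ≤ ‖ζ - z‖ * ‖ζ'‖ := by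
        exact mul_le_mul_of_nonneg_right (hU n _) (norm_nonneg _)
    _ ≤ δ * ‖ζ'‖ := by
        have : ‖ζ - z‖ ≤ δ := by rw [← dist_eq_norm]; exact hzd.le
        exact mul_le_mul_of_nonneg_right this (norm_nonneg _)
  have hznorm : ‖z‖ ≤ ‖ζ‖ + 1 := by
    have : ‖z‖ ≤ ‖ζ‖ + ‖ζ - z‖ := by
      have := norm_sub_norm_le ζ z -- not directly; use triangle
      calc ‖z‖ = ‖ζ - (ζ - z)‖ := by rw [sub_sub_cancel]
      _ ≤ ‖ζ‖ + ‖ζ - z‖ := norm_sub_le _ _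
    have h6 : ‖ζ - z‖ ≤ δ := by rw [← dist_eq_norm]; exact hzd.le
    linarith
  have b2 : ‖(inner ℂ (U n z) (ζ' - z') : ℂ)‖ ≤ (‖ζ‖ + 1) * δ := by
    calc ‖(inner ℂ (U n z) (ζ' - z') : ℂ)‖ ≤ ‖U n z‖ * ‖ζ' - z'‖ := norm_inner_le_norm _ _
    _ ≤ ‖z‖ * ‖ζ' - z'‖ := mul_le_mul_of_nonneg_right (hU n _) (norm_nonneg _)
    _ ≤ (‖ζ‖ + 1) * δ := by
        have h7 : ‖ζ' - z'‖ ≤ δ := by rw [← dist_eq_norm]; exact hz'd.le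
        exact mul_le_mul hznorm h7 (norm_nonneg _) (by positivity)
  have b0 : ‖(inner ℂ (U n z) z' : ℂ)‖ < ε / 2 := by
    have := hN n hn; rwa [dist_zero_right] at this
  have bδ : δ * ‖ζ'‖ + (‖ζ‖ + 1) * δ ≤ ε / 2 := by
    have h8 : δ * (‖ζ‖ + ‖ζ'‖ + 1) ≤ (ε / (2 * (‖ζ‖ + ‖ζ'‖ + 2))) * (‖ζ‖ + ‖ζ'‖ + 1) := by
      apply mul_le_mul_of_nonneg_right hδ2; positivity
    have h9 : (ε / (2 * (‖ζ‖ + ‖ζ'‖ + 2))) * (‖ζ‖ + ‖ζ'‖ + 1) ≤ ε / 2 := by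
      rw [div_mul_eq_mul_div, div_le_div_iff₀ (by positivity) (by norm_num)]
      nlinarith [norm_nonneg ζ, norm_nonneg ζ']
    nlinarith
  rw [dist_zero_right, key]
  calc ‖(inner ℂ (U n z) z' + inner ℂ (U n (ζ - z)) ζ' + inner ℂ (U n z) (ζ' - z') : ℂ)‖
      ≤ ‖(inner ℂ (U n z) z' : ℂ)‖ + ‖(inner ℂ (U n (ζ - z)) ζ' : ℂ)‖
        + ‖(inner ℂ (U n z) (ζ' - z') : ℂ)‖ := norm_add₃_le
  _ < ε := by linarith

/-- Let `(M,τ)` be a tracial von Neumann algebra, `N ⊆ M` a diffuse subalgebra, and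
`u ∈ M` a unitary with `u*Nu ∩ N` diffuse.  Then every bounded `N`-`N` bimodular map
`T : L²(NuN) → L²(N) ⊗ L²(N^op)` is zero.

Modeling: `B` is a C*-algebra (`M`) with a unital injective embedding `ι : A → B` of the
subalgebra `N = A`; `M` acts on `H = L²(M,τ)` by commuting left/right actions `L`, `R`
with cyclic trace vector `Ω`.  Diffuseness of `u*Nu ∩ N` is encoded by a sequence of
unitaries `v n ∈ N ∩ u*Nu` tending to `0` in the weak operator topology.  `K = L²(N)` is
the closure of `NΩ`, `S = L²(NuN)` the closed span of `{x u y Ω : x,y ∈ N}`, and `E`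
with `t : K → K → E` is the coarse bimodule `L²(N) ⊗ L²(N^op)`. -/
theorem stmt10 {A B H E : Type*}
    [NormedRing A] [StarRing A] [CStarRing A] [NormedAlgebra ℂ A]
    [NormedRing B] [StarRing B] [CStarRing B] [NormedAlgebra ℂ B]
    [NormedAddCommGroup H] [InnerProductSpace ℂ H] [CompleteSpace H]
    [NormedAddCommGroup E] [InnerProductSpace ℂ E] [CompleteSpace E]
    (ι : A →⋆ₐ[ℂ] B) (hι : Function.Injective ι)
    (L : B →⋆ₐ[ℂ] (H →L[ℂ] H)) (R : Bᵐᵒᵖ →⋆ₐ[ℂ] (H →L[ℂ] H))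
    (hLR : ∀ (x : B) (y : Bᵐᵒᵖ), (L x).comp (R y) = (R y).comp (L x))
    (Ω : H)
    (hcyc : (Submodule.span ℂ {ξ : H | ∃ b : B, ξ = L b Ω}).topologicalClosure = ⊤)
    (htrvec : ∀ b : B, L b Ω = R (op b) Ω)
    (htrace : ∀ x y : B, (inner ℂ (L (x * y) Ω) Ω : ℂ) = (inner ℂ (L (y * x) Ω) Ω : ℂ))
    (u : B) (hu : u ∈ unitary B)
    (hdiff : ∃ v : ℕ → A, (∀ n, v n ∈ unitary A) ∧
      (∀ n, ∃ w : A, ι (v n) = star u * ι w * u) ∧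
      (∀ ξ η : H, Tendsto (fun n => (inner ℂ (L (ι (v n)) ξ) η : ℂ)) atTop (nhds 0)))
    -- `K = L²(N)`:
    (K : Submodule ℂ H)
    (hK : K = (Submodule.span ℂ {ξ : H | ∃ a : A, ξ = L (ι a) Ω}).topologicalClosure)
    (hKL : ∀ (a : A) (ξ : H), ξ ∈ K → L (ι a) ξ ∈ K)
    (hKR : ∀ (a : A) (ξ : H), ξ ∈ K → R (op (ι a)) ξ ∈ K)
    -- the coarse bimodule `E = L²(N) ⊗ L²(N^op)`:
    (t : K → K → E)
    (htinner : ∀ ξ ξ' η η' : K,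
      (inner ℂ (t ξ η) (t ξ' η') : ℂ) = (inner ℂ (ξ : H) (ξ' : H) : ℂ) * (inner ℂ (η : H) (η' : H) : ℂ))
    (htdense : (Submodule.span ℂ {z : E | ∃ ξ η, z = t ξ η}).topologicalClosure = ⊤)
    (Lc : A →⋆ₐ[ℂ] (E →L[ℂ] E)) (Rc : Aᵐᵒᵖ →⋆ₐ[ℂ] (E →L[ℂ] E))
    (hLc : ∀ (a : A) (ξ η : K), Lc a (t ξ η) = t ⟨L (ι a) ξ, hKL a ξ ξ.2⟩ η)
    (hRc : ∀ (a : A) (ξ η : K), Rc (op a) (t ξ η) = t ξ ⟨R (op (ι a)) η, hKR a η η.2⟩)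
    -- `S = L²(NuN)`:
    (S : Submodule ℂ H)
    (hS : S = (Submodule.span ℂ
      {ξ : H | ∃ x y : A, ξ = L (ι x) (R (op (ι y)) (L u Ω))}).topologicalClosure)
    (hSL : ∀ (a : A) (ξ : H), ξ ∈ S → L (ι a) ξ ∈ S)
    (hSR : ∀ (a : A) (ξ : H), ξ ∈ S → R (op (ι a)) ξ ∈ S) :
    ∀ T : S →L[ℂ] E,
      (∀ (a : A) (ξ : S), T ⟨L (ι a) ξ, hSL a ξ ξ.2⟩ = Lc a (T ξ)) →
      (∀ (a : A) (ξ : S), T ⟨R (op (ι a)) ξ, hSR a ξ ξ.2⟩ = Rc (op a) (T ξ)) →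
      T = 0 := by
  intro T hTL hTR
  obtain ⟨v, hvU, hvw, hvweak⟩ := hdiff
  choose w hw using hvw
  -- basic unitary cancellation lemmas in B
  have husu : star u * u = 1 := Unitary.star_mul_self_of_mem hu
  have huus : u * star u = 1 := Unitary.mul_star_self_of_mem hu
  have c1 : ∀ b : B, star u * (u * b) = b := fun b => by rw [← mul_assoc, husu, one_mul]
  have c2 : ∀ b : B, u * (star u * b) = b := fun b => by rw [← mul_assoc, huus, one_mul]
  have hvsv : ∀ n, star (ι (v n)) * ι (v n) = 1 := fun n => by
    rw [← map_star, ← map_mul, Unitary.star_mul_self_of_mem (hvU n), map_one]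
  have hvvs : ∀ n, ι (v n) * star (ι (v n)) = 1 := fun n => by
    rw [← map_star, ← map_mul, Unitary.mul_star_self_of_mem (hvU n), map_one]
  have c3 : ∀ n, ∀ b : B, star (ι (v n)) * (ι (v n) * b) = b := fun n b => by
    rw [← mul_assoc, hvsv n, one_mul]
  have c4 : ∀ n, ∀ b : B, ι (v n) * (star (ι (v n)) * b) = b := fun n b => by
    rw [← mul_assoc, hvvs n, one_mul]
  -- the w n are unitary
  have hιw : ∀ n, ι (w n) = u * (ι (v n) * star u) := by
    intro n
    rw [hw n]
    simp only [mul_assoc, c2, c1]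
    rw [← mul_assoc (ι (w n)), mul_assoc, huus, mul_one]
  have hwU : ∀ n, w n ∈ unitary A := by
    intro n
    rw [Unitary.mem_iff]
    constructor
    · apply hι
      rw [map_mul, map_star, map_one, hιw n]
      simp only [star_mul, star_star, mul_assoc, c1, c2, c3, c4]
      exact huus
    · apply hι
      rw [map_mul, map_star, map_one, hιw n]
      simp only [star_mul, star_star, mul_assoc, c1, c2, c3, c4]
      exact huus
  -- ξ₀ = uΩ ∈ S
  have hξ₀S : (L u Ω : H) ∈ S := by
    rw [hS]
    apply Submodule.le_topologicalClosure
    apply Submodule.subset_span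
    exact ⟨1, 1, by simp⟩
  set ξ₀S : S := ⟨L u Ω, hξ₀S⟩ with hξ₀Sdef
  -- key commutation: v n acting on the right equals w n acting on the left on ξ₀
  have hkey : ∀ n, R (op (ι (v n))) (L u Ω) = L (ι (w n)) (L u Ω) := by
    intro n
    have h5 : R (op (ι (v n))) (L u Ω) = L u (R (op (ι (v n))) Ω) :=
      (ContinuousLinearMap.ext_iff.mp (hLR u (op (ι (v n)))) Ω).symm
    rw [h5, ← htrvec]
    have h6 : L u (L (ι (v n)) Ω) = L (u * ι (v n)) Ω := by
      rw [map_mul]; rfl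
    have h7 : u * ι (v n) = ι (w n) * u := by
      rw [hw n, ← mul_assoc, ← mul_assoc, huus, one_mul]
    rw [h6, h7, map_mul]; rfl
  set ζ : E := T ξ₀S with hζdef
  have hfix : ∀ n, Lc (star (w n)) (Rc (op (v n)) ζ) = ζ := by
    intro n
    have e1 := hTR (v n) ξ₀S
    have e2 := hTL (w n) ξ₀S
    have e3 : (⟨R (op (ι (v n))) ξ₀S, hSR (v n) ξ₀S ξ₀S.2⟩ : S)
        = ⟨L (ι (w n)) ξ₀S, hSL (w n) ξ₀S ξ₀S.2⟩ := Subtype.ext (hkey n)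
    rw [e3, e2] at e1
    rw [← e1]
    have e4 : Lc (star (w n)) (Lc (w n) ζ) = (Lc (star (w n)) * Lc (w n)) ζ := rfl
    rw [e4, ← map_mul, Unitary.star_mul_self_of_mem (hwU n), map_one,
      ContinuousLinearMap.one_apply]
  -- weak convergence of the right action of v n on all of H
  have hRweak : ∀ ξ η : H,
      Tendsto (fun n => (inner ℂ (R (op (ι (v n))) ξ) η : ℂ)) atTop (nhds 0) := by
    have hUH : ∀ n (x : H), ‖(R (op (ι (v n)))).toLinearMap x‖ ≤ ‖x‖ := by
      intro n x
      have hc : star (op (ι (v n))) * op (ι (v n)) = 1 := by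
        rw [← MulOpposite.op_star, ← MulOpposite.op_mul, hvvs n, MulOpposite.op_one]
      exact le_of_eq (aux_isom R hc x)
    have h0H : ∀ z ∈ {ξ : H | ∃ b : B, ξ = L b Ω}, ∀ z' ∈ {ξ : H | ∃ b : B, ξ = L b Ω},
        Tendsto (fun n => (inner ℂ ((R (op (ι (v n)))).toLinearMap z) z' : ℂ)) atTop (nhds 0) := by
      rintro _ ⟨b, rfl⟩ _ ⟨b', rfl⟩
      have step : ∀ n, (inner ℂ ((R (op (ι (v n)))).toLinearMap (L b Ω)) (L b' Ω) : ℂ)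
          = inner ℂ (L (ι (v n)) (L (star b' * b) Ω)) Ω := by
        intro n
        have h5 : (R (op (ι (v n)))).toLinearMap (L b Ω) = L (b * ι (v n)) Ω := by
          have h5a : R (op (ι (v n))) (L b Ω) = L b (R (op (ι (v n))) Ω) :=
            (ContinuousLinearMap.ext_iff.mp (hLR b (op (ι (v n)))) Ω).symm
          show R (op (ι (v n))) (L b Ω) = _
          rw [h5a, ← htrvec, map_mul]; rfl
        rw [h5]
        have h6 := ContinuousLinearMap.adjoint_inner_left (𝕜 := ℂ) (L b') Ω (L (b * ι (v n)) Ω)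
        rw [← ContinuousLinearMap.star_eq_adjoint, ← map_star L b'] at h6
        rw [← h6]
        have h7 : L (star b') (L (b * ι (v n)) Ω) = L (star b' * b * ι (v n)) Ω := by
          rw [mul_assoc, map_mul L (star b') (b * ι (v n))]; rfl
        rw [h7, htrace (star b' * b) (ι (v n)), map_mul]; rfl
      simp only [step]
      exact hvweak (L (star b' * b) Ω) Ω
    intro ξ η
    exact weak_ext (fun n => (R (op (ι (v n)))).toLinearMap) hUH _ hcyc h0H ξ η
  -- weak convergence of U n := Lc (star (w n)) ∘ Rc (op (v n)) on E
  have hwsw : ∀ n, star (star (w n)) * star (w n) = 1 := fun n => by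
    rw [star_star]; exact Unitary.mul_star_self_of_mem (hwU n)
  have hUE : ∀ n (x : E),
      ‖(((Lc (star (w n))).comp (Rc (op (v n)))) : E →ₗ[ℂ] E) x‖ ≤ ‖x‖ := by
    intro n x
    show ‖Lc (star (w n)) (Rc (op (v n)) x)‖ ≤ ‖x‖
    rw [aux_isom Lc (hwsw n)]
    have hc : star (op (v n)) * op (v n) = 1 := by
      rw [← MulOpposite.op_star, ← MulOpposite.op_mul,
        Unitary.mul_star_self_of_mem (hvU n), MulOpposite.op_one]
    exact le_of_eq (aux_isom Rc hc x)
  have hEweak : ∀ ζ₁ ζ₂ : E,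
      Tendsto (fun n =>
        (inner ℂ ((((Lc (star (w n))).comp (Rc (op (v n)))) : E →ₗ[ℂ] E) ζ₁) ζ₂ : ℂ))
        atTop (nhds 0) := by
    have h0E : ∀ z ∈ {z : E | ∃ ξ η, z = t ξ η}, ∀ z' ∈ {z : E | ∃ ξ η, z = t ξ η},
        Tendsto (fun n =>
          (inner ℂ ((((Lc (star (w n))).comp (Rc (op (v n)))) : E →ₗ[ℂ] E) z) z' : ℂ))
          atTop (nhds 0) := by
      rintro _ ⟨ξ, η, rfl⟩ _ ⟨ξ', η', rfl⟩
      have step : ∀ n,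
          (inner ℂ ((((Lc (star (w n))).comp (Rc (op (v n)))) : E →ₗ[ℂ] E) (t ξ η)) (t ξ' η') : ℂ)
          = (inner ℂ (L (ι (star (w n))) (ξ : H)) (ξ' : H) : ℂ)
            * (inner ℂ (R (op (ι (v n))) (η : H)) (η' : H) : ℂ) := by
        intro n
        show (inner ℂ (Lc (star (w n)) (Rc (op (v n)) (t ξ η))) (t ξ' η') : ℂ) = _
        rw [hRc (v n) ξ η, hLc (star (w n)) ξ _, htinner]
      simp only [step]
      apply squeeze_zero_norm (a := fun n =>
        (‖(ξ : H)‖ * ‖(ξ' : H)‖) * ‖(inner ℂ (R (op (ι (v n))) (η : H)) (η' : H) : ℂ)‖)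
      · intro n
        rw [norm_mul]
        apply mul_le_mul_of_nonneg_right _ (norm_nonneg _)
        calc ‖(inner ℂ (L (ι (star (w n))) (ξ : H)) (ξ' : H) : ℂ)‖
            ≤ ‖L (ι (star (w n))) (ξ : H)‖ * ‖(ξ' : H)‖ := norm_inner_le_norm _ _
        _ = ‖(ξ : H)‖ * ‖(ξ' : H)‖ := by
            congr 1
            apply aux_isom L
            rw [← map_star, ← map_mul, star_star, Unitary.mul_star_self_of_mem (hwU n), map_one]
      · have := (hRweak (η : H) (η' : H)).norm
        rw [norm_zero] at this
        simpa using this.const_mul (‖(ξ : H)‖ * ‖(ξ' : H)‖)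
    intro ζ₁ ζ₂
    exact weak_ext (fun n => (((Lc (star (w n))).comp (Rc (op (v n)))) : E →ₗ[ℂ] E))
      hUE _ htdense h0E ζ₁ ζ₂
  -- conclude ζ = 0
  have hζ0 : ζ = 0 := by
    have hconst : (fun n : ℕ =>
        (inner ℂ ((((Lc (star (w n))).comp (Rc (op (v n)))) : E →ₗ[ℂ] E) ζ) ζ : ℂ))
        = fun _ => (inner ℂ ζ ζ : ℂ) := by
      funext n
      show (inner ℂ (Lc (star (w n)) (Rc (op (v n)) ζ)) ζ : ℂ) = _
      rw [hfix n]
    have h8 := hEweak ζ ζ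
    rw [hconst] at h8
    have h9 : (inner ℂ ζ ζ : ℂ) = 0 := tendsto_nhds_unique tendsto_const_nhds h8
    exact inner_self_eq_zero.mp h9
  -- T vanishes on the generating span
  set G : Submodule ℂ H := Submodule.span ℂ
    {ξ : H | ∃ x y : A, ξ = L (ι x) (R (op (ι y)) (L u Ω))} with hGdef
  have hGS : G ≤ S := by
    rw [hS]; exact Submodule.le_topologicalClosure _
  have hgen : ∀ h, h ∈ G → ∀ (hh : h ∈ S), T ⟨h, hh⟩ = 0 := by
    intro h hmem
    refine Submodule.span_induction
      (p := fun x _ => ∀ (hh : x ∈ S), T ⟨x, hh⟩ = 0) ?_ ?_ ?_ ?_ hmem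
    · rintro _ ⟨a, b, rfl⟩ hh
      have hmem1 : R (op (ι b)) (L u Ω) ∈ S := hSR b _ hξ₀S
      have e : (⟨L (ι a) (R (op (ι b)) (L u Ω)), hh⟩ : S)
          = ⟨L (ι a) (⟨R (op (ι b)) (L u Ω), hmem1⟩ : S),
              hSL a _ (⟨R (op (ι b)) (L u Ω), hmem1⟩ : S).2⟩ := Subtype.ext rfl
      rw [e, hTL]
      have e2 : (⟨R (op (ι b)) (L u Ω), hmem1⟩ : S)
          = ⟨R (op (ι b)) ξ₀S, hSR b ξ₀S ξ₀S.2⟩ := Subtype.ext rfl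
      rw [e2, hTR, ← hζdef, hζ0, map_zero, map_zero]
    · intro hh
      have e : (⟨(0 : H), hh⟩ : S) = 0 := rfl
      rw [e, map_zero]
    · intro x y hx hy ihx ihy hh
      have e : (⟨x + y, hh⟩ : S) = ⟨x, hGS hx⟩ + ⟨y, hGS hy⟩ := rfl
      rw [e, map_add, ihx (hGS hx), ihy (hGS hy), add_zero]
    · intro r x hx ih hh
      have e : (⟨r • x, hh⟩ : S) = r • (⟨x, hGS hx⟩ : S) := rfl
      rw [e, map_smul, ih (hGS hx), smul_zero]
  -- density: T vanishes everywhere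
  ext ξ
  obtain ⟨x, hx⟩ := ξ
  have hmemc : x ∈ closure (G : Set H) := by
    rw [hS] at hx
    rw [← Submodule.topologicalClosure_coe]
    exact hx
  have hx' : x ∈ S := hx
  obtain ⟨g, hg, hgt⟩ := mem_closure_iff_seq_limit.mp hmemc
  set gS : ℕ → S := fun n => ⟨g n, hGS (hg n)⟩ with hgSdef
  have h1 : Tendsto gS atTop (nhds (⟨x, hx'⟩ : S)) := by
    rw [tendsto_subtype_rng]
    exact hgt
  have h2 : Tendsto (fun n => T (gS n)) atTop (nhds (T ⟨x, hx'⟩)) :=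
    ((T.continuous.tendsto _).comp h1)
  have h3 : (fun n => T (gS n)) = fun _ => (0 : E) :=
    funext fun n => hgen (g n) (hg n) _
  rw [h3] at h2
  have h4 : T ⟨x, hx'⟩ = 0 := tendsto_nhds_unique h2 tendsto_const_nhds
  have h5 : (⟨x, hx⟩ : S) = ⟨x, hx'⟩ := rfl
  rw [h5, h4, ContinuousLinearMap.zero_apply]
end

section
/- Let k ≥ 1, let T, Y ∈ M_k(ℂ), ε > 0, and set R = ‖Y‖_∞. Suppose Q ∈ M_k(ℂ) is an orthogonal projection with ‖Q(T−Y)‖_∞ ≤ ε and tr(1−Q) ≤ ε (normalized trace). Then there exists an orthogonal projection P ∈ M_k(ℂ) with P ≤ χ_{[0,R+ε]}(|T*|), tr(1−P) ≤ 2ε, and ‖P(T−Y)‖_∞ ≤ ε. -/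
open Matrix
open scoped Matrix.Norms.L2Operator ComplexOrder

/-- The spectral projection `χ_E(A)` of a Hermitian matrix `A` for a Borel set `E ⊆ ℝ`. -/
noncomputable def specProj {k : ℕ} {A : Matrix (Fin k) (Fin k) ℂ} (hA : A.IsHermitian)
    (E : Set ℝ) : Matrix (Fin k) (Fin k) ℂ :=
  (hA.eigenvectorUnitary : Matrix (Fin k) (Fin k) ℂ) *
    Matrix.diagonal (fun i => Set.indicator E (fun _ => (1 : ℂ)) (hA.eigenvalues i)) *
    star (hA.eigenvectorUnitary : Matrix (Fin k) (Fin k) ℂ)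

/-- The normalized trace on `M_k(ℂ)` (`tr(1) = 1`), real part. -/
noncomputable def normTraceR {k : ℕ} (A : Matrix (Fin k) (Fin k) ℂ) : ℝ :=
  (A.trace).re / k

namespace Stmt11Aux

open scoped ComplexInnerProductSpace

noncomputable section
variable {k : ℕ}

lemma traceAux (A : Matrix (Fin k) (Fin k) ℂ) :
    A.trace = LinearMap.trace ℂ _ (toEuclideanLin A) := by
  rw [LinearMap.trace_eq_matrix_trace ℂ (PiLp.basisFun 2 ℂ (Fin k))]
  congr 1
  rw [toEuclideanLin_eq_toLin, LinearMap.toMatrix_toLin]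

lemma compAux (A B : Matrix (Fin k) (Fin k) ℂ) :
    toEuclideanLin (A * B) = (toEuclideanLin A) ∘ₗ (toEuclideanLin B) := by
  rw [toEuclideanLin_eq_toLin, Matrix.toLin_mul _ (PiLp.basisFun 2 ℂ (Fin k))]

lemma fixAux {A : Matrix (Fin k) (Fin k) ℂ} (h : A * A = A)
    {x : EuclideanSpace ℂ (Fin k)} (hx : x ∈ LinearMap.range (toEuclideanLin A)) :
    toEuclideanLin A x = x := by
  obtain ⟨y, rfl⟩ := hx
  have := congrArg (fun M => toEuclideanLin M y) h
  simpa [compAux] using this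

lemma isProjAux {A : Matrix (Fin k) (Fin k) ℂ} (h : A * A = A) :
    LinearMap.IsProj (LinearMap.range (toEuclideanLin A)) (toEuclideanLin A) :=
  ⟨fun x => LinearMap.mem_range_self _ x, fun _ hx => fixAux h hx⟩

lemma traceProjAux {A : Matrix (Fin k) (Fin k) ℂ} (h : A * A = A) :
    A.trace = (Module.finrank ℂ (LinearMap.range (toEuclideanLin A)) : ℂ) := by
  rw [traceAux, (isProjAux h).trace]

lemma clmAux (M : Matrix (Fin k) (Fin k) ℂ) (x : EuclideanSpace ℂ (Fin k)) :
    (toEuclideanCLM (𝕜 := ℂ) M) x = toEuclideanLin M x := by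
  rw [← Matrix.coe_toEuclideanCLM_eq_toEuclideanLin]; rfl

lemma opAux (M : Matrix (Fin k) (Fin k) ℂ) (x : EuclideanSpace ℂ (Fin k)) :
    ‖toEuclideanLin M x‖ ≤ ‖M‖ * ‖x‖ := by
  rw [← clmAux]
  exact (toEuclideanCLM (𝕜 := ℂ) M).le_opNorm x

lemma adjAux (M : Matrix (Fin k) (Fin k) ℂ) (x y : EuclideanSpace ℂ (Fin k)) :
    ⟪toEuclideanLin Mᴴ x, y⟫ = ⟪x, toEuclideanLin M y⟫ := by
  have h : toEuclideanCLM (𝕜 := ℂ) Mᴴ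
      = ContinuousLinearMap.adjoint (toEuclideanCLM (𝕜 := ℂ) M) := by
    rw [← ContinuousLinearMap.star_eq_adjoint, ← map_star (toEuclideanCLM (𝕜 := ℂ) (n := Fin k)) M,
      Matrix.star_eq_conjTranspose]
  rw [← clmAux, ← clmAux, h, ContinuousLinearMap.adjoint_inner_left]

/-- The matrix of the orthogonal projection onto a subspace `W`. -/
def pm (W : Submodule ℂ (EuclideanSpace ℂ (Fin k))) : Matrix (Fin k) (Fin k) ℂ :=
  (toEuclideanCLM (𝕜 := ℂ)).symm (W.subtypeL ∘L W.orthogonalProjectionOnto)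

variable (W : Submodule ℂ (EuclideanSpace ℂ (Fin k)))

lemma pm_clm : toEuclideanCLM (𝕜 := ℂ) (pm W) = W.subtypeL ∘L W.orthogonalProjectionOnto := by
  simp [pm]

lemma pm_apply (x : EuclideanSpace ℂ (Fin k)) :
    toEuclideanLin (pm W) x = (W.orthogonalProjectionOnto x : EuclideanSpace ℂ (Fin k)) := by
  rw [← Matrix.coe_toEuclideanCLM_eq_toEuclideanLin, pm_clm]
  rfl

lemma pm_herm : (pm W).IsHermitian := by
  have : star (pm W) = pm W := by
    apply EquivLike.injective (toEuclideanCLM (𝕜 := ℂ) (n := Fin k))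
    show toEuclideanCLM (𝕜 := ℂ) (star (pm W)) = toEuclideanCLM (𝕜 := ℂ) (pm W)
    rw [map_star (toEuclideanCLM (𝕜 := ℂ) (n := Fin k)) (pm W), pm_clm,
      (show IsSelfAdjoint (W.subtypeL ∘L W.orthogonalProjectionOnto) from
        isSelfAdjoint_starProjection W).star_eq]
  rwa [Matrix.star_eq_conjTranspose] at this

lemma pm_fix {x : EuclideanSpace ℂ (Fin k)} (hx : x ∈ W) : toEuclideanLin (pm W) x = x := by
  rw [pm_apply, (show (W.orthogonalProjectionOnto x : EuclideanSpace ℂ (Fin k)) = x from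
    Submodule.starProjection_eq_self_iff.mpr hx)]

lemma pm_idem : pm W * pm W = pm W := by
  apply (toEuclideanLin (𝕜 := ℂ) (m := Fin k) (n := Fin k)).injective
  rw [compAux]
  refine LinearMap.ext fun x => ?_
  rw [LinearMap.comp_apply, pm_apply, pm_apply,
    (show ((W.orthogonalProjectionOnto (W.orthogonalProjectionOnto x : EuclideanSpace ℂ (Fin k))) :
      EuclideanSpace ℂ (Fin k)) = W.orthogonalProjectionOnto x from
      Submodule.starProjection_eq_self_iff.mpr (W.orthogonalProjectionOnto x).2)]

lemma pm_range : LinearMap.range (toEuclideanLin (pm W)) = W := by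
  apply le_antisymm
  · rintro x ⟨y, rfl⟩
    rw [pm_apply]; exact (W.orthogonalProjectionOnto y).2
  · intro x hx
    exact ⟨x, pm_fix W hx⟩

lemma pm_norm : ‖pm W‖ ≤ 1 := by
  rw [Matrix.cstar_norm_def, pm_clm]
  apply ContinuousLinearMap.opNorm_le_bound _ zero_le_one
  intro x
  rw [one_mul]
  calc ‖(W.subtypeL ∘L W.orthogonalProjectionOnto) x‖
      = ‖(W.orthogonalProjectionOnto x : EuclideanSpace ℂ (Fin k))‖ := rfl
    _ = ‖W.orthogonalProjectionOnto x‖ := rfl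
    _ ≤ ‖W.orthogonalProjectionOnto‖ * ‖x‖ := W.orthogonalProjectionOnto.le_opNorm x
    _ ≤ 1 * ‖x‖ := by gcongr; exact Submodule.orthogonalProjectionOnto_norm_le W
    _ = ‖x‖ := one_mul _

lemma specProj_idem {A : Matrix (Fin k) (Fin k) ℂ} (hA : A.IsHermitian) (S : Set ℝ) :
    specProj hA S * specProj hA S = specProj hA S := by
  set U := (hA.eigenvectorUnitary : Matrix (Fin k) (Fin k) ℂ) with hU
  set D := Matrix.diagonal (fun i => Set.indicator S (fun _ => (1 : ℂ)) (hA.eigenvalues i)) with hD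
  have hsU : star U * U = 1 := Unitary.coe_star_mul_self hA.eigenvectorUnitary
  have hDD : D * D = D := by
    rw [hD, Matrix.diagonal_mul_diagonal]
    refine congrArg Matrix.diagonal (funext fun i => ?_)
    by_cases h : hA.eigenvalues i ∈ S <;> simp [Set.indicator_of_mem, Set.indicator_of_notMem, h]
  show (U * D * star U) * (U * D * star U) = U * D * star U
  calc (U * D * star U) * (U * D * star U)
      = U * (D * ((star U * U) * (D * star U))) := by simp only [Matrix.mul_assoc]
    _ = U * (D * (D * star U)) := by rw [hsU, Matrix.one_mul]
    _ = U * ((D * D) * star U) := by rw [Matrix.mul_assoc D D (star U)]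
    _ = U * D * star U := by rw [hDD, Matrix.mul_assoc]

lemma specProj_apply_basis {A : Matrix (Fin k) (Fin k) ℂ} (hA : A.IsHermitian) (S : Set ℝ)
    (j : Fin k) :
    toEuclideanLin (specProj hA S) (hA.eigenvectorBasis j) =
      Set.indicator S (fun _ => (1:ℂ)) (hA.eigenvalues j) • hA.eigenvectorBasis j := by
  set U := (hA.eigenvectorUnitary : Matrix (Fin k) (Fin k) ℂ) with hU
  set d : Fin k → ℂ := fun i => Set.indicator S (fun _ => (1 : ℂ)) (hA.eigenvalues i) with hd
  set w : Fin k → ℂ := ⇑(hA.eigenvectorBasis j) with hw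
  have hfun : specProj hA S *ᵥ w = d j • w := by
    have h1 : star U *ᵥ w = Pi.single j 1 := hA.star_eigenvectorUnitary_mulVec j
    have h2 : Matrix.diagonal d *ᵥ Pi.single j (1:ℂ) = d j • (Pi.single j (1:ℂ) : Fin k → ℂ) := by
      funext i
      rcases eq_or_ne i j with rfl | hij
      · simp [Matrix.mulVec_single]
      · simp [Matrix.mulVec_single, Matrix.diagonal_apply_ne _ hij, Pi.single_eq_of_ne hij]
    calc specProj hA S *ᵥ w
        = U *ᵥ (Matrix.diagonal d *ᵥ (star U *ᵥ w)) := by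
          show (U * Matrix.diagonal d * star U) *ᵥ w = _
          rw [Matrix.mulVec_mulVec, Matrix.mulVec_mulVec]
      _ = U *ᵥ (d j • (Pi.single j (1:ℂ) : Fin k → ℂ)) := by rw [h1, h2]
      _ = d j • (U *ᵥ (Pi.single j (1:ℂ) : Fin k → ℂ)) := by rw [Matrix.mulVec_smul]
      _ = d j • w := by rw [hw, hA.eigenvectorUnitary_mulVec]
  ext i
  exact congrFun hfun i

lemma keyDisjoint (T Y B Q : Matrix (Fin k) (Fin k) ℂ) (ε : ℝ) (hε : 0 < ε)
    (hB : B.PosSemidef) (hBsq : B * B = T * Tᴴ)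
    (hQher : Q.IsHermitian) (hQT : ‖Q * (T - Y)‖ ≤ ε)
    (ξ : EuclideanSpace ℂ (Fin k))
    (hEξ : toEuclideanLin (specProj hB.isHermitian (Set.Icc 0 (‖Y‖ + ε))) ξ = 0)
    (hQξ : toEuclideanLin Q ξ = ξ) : ξ = 0 := by
  by_contra hne
  set R := ‖Y‖ with hR
  have hR0 : 0 ≤ R := norm_nonneg Y
  have hRε : 0 ≤ R + ε := by linarith
  set v := hB.isHermitian.eigenvectorBasis with hv
  set μ := hB.isHermitian.eigenvalues with hμ
  set d : Fin k → ℂ := fun i => Set.indicator (Set.Icc 0 (R + ε)) (fun _ => (1:ℂ)) (μ i) with hd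
  set c : Fin k → ℂ := fun i => v.repr ξ i with hc
  have hcoeff : ∀ (l : Fin k → ℂ) (i : Fin k),
      ⟪(v i : EuclideanSpace ℂ (Fin k)), ∑ j, l j • (v j : EuclideanSpace ℂ (Fin k))⟫ = l i :=
    fun l i => v.orthonormal.inner_right_fintype l i
  have hnorm : ∀ l : Fin k → ℂ,
      ‖∑ i, l i • (v i : EuclideanSpace ℂ (Fin k))‖ ^ 2 = ∑ i, ‖l i‖ ^ 2 := by
    intro l
    have h1 : ⟪∑ i, l i • (v i : EuclideanSpace ℂ (Fin k)),
        ∑ i, l i • (v i : EuclideanSpace ℂ (Fin k))⟫ = ∑ i, (‖l i‖ : ℂ) ^ 2 := by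
      rw [sum_inner]
      refine Finset.sum_congr rfl fun i _ => ?_
      rw [inner_smul_left, hcoeff l i, Complex.conj_mul']
    rw [inner_self_eq_norm_sq_to_K] at h1
    exact Complex.ofReal_injective (by push_cast; exact h1)
  have hsum : ∑ i, c i • (v i : EuclideanSpace ℂ (Fin k)) = ξ := v.sum_repr ξ
  have hEξ' : (0 : EuclideanSpace ℂ (Fin k))
      = ∑ i, (c i * d i) • (v i : EuclideanSpace ℂ (Fin k)) := by
    rw [← hEξ, ← hsum, map_sum]
    refine Finset.sum_congr rfl fun i _ => ?_
    rw [_root_.map_smul, specProj_apply_basis, smul_smul]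
  have hcd : ∀ i, c i * d i = 0 := by
    intro i
    have := congrArg (fun z => ⟪(v i : EuclideanSpace ℂ (Fin k)), z⟫) hEξ'
    simpa [hcoeff (fun j => c j * d j) i, inner_zero_right] using this.symm
  have hgt : ∀ i, c i ≠ 0 → R + ε < μ i := by
    intro i hci
    have hd0 : d i = 0 := by
      rcases mul_eq_zero.mp (hcd i) with h | h
      · exact absurd h hci
      · exact h
    have hmem : μ i ∉ Set.Icc 0 (R + ε) := by
      intro hmem
      simp only [hd, Set.indicator_of_mem hmem] at hd0
      exact one_ne_zero hd0
    have h0 : 0 ≤ μ i := hB.eigenvalues_nonneg i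
    simp only [Set.mem_Icc, not_and, not_le] at hmem
    exact hmem h0
  have hBv : ∀ j, toEuclideanLin B (v j) = ((μ j : ℂ)) • (v j : EuclideanSpace ℂ (Fin k)) := by
    intro j
    ext i
    have := congrFun (hB.isHermitian.mulVec_eigenvectorBasis j) i
    simpa [Complex.real_smul] using this
  have hBξ : toEuclideanLin B ξ = ∑ i, (c i * (μ i : ℂ)) • (v i : EuclideanSpace ℂ (Fin k)) := by
    rw [← hsum, map_sum]
    refine Finset.sum_congr rfl fun i _ => ?_
    rw [_root_.map_smul, hBv, smul_smul]
  obtain ⟨i₀, hi₀⟩ : ∃ i, c i ≠ 0 := by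
    by_contra hall
    push_neg at hall
    apply hne
    rw [← hsum]
    simp [hall]
  have hstrict : ((R + ε) * ‖ξ‖) ^ 2 < ‖toEuclideanLin B ξ‖ ^ 2 := by
    rw [mul_pow, ← hsum, hnorm, hsum, hBξ, hnorm, Finset.mul_sum]
    have key : ∀ i, c i ≠ 0 → (R + ε) ^ 2 * ‖c i‖ ^ 2 < ‖c i * (μ i : ℂ)‖ ^ 2 := by
      intro i hci
      rw [norm_mul, Complex.norm_real, mul_pow]
      have h1 : (R + ε) ^ 2 < ‖μ i‖ ^ 2 := by
        have := hgt i hci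
        rw [Real.norm_eq_abs, abs_of_nonneg (hB.eigenvalues_nonneg i)]
        exact pow_lt_pow_left₀ this hRε two_ne_zero
      have h2 : 0 < ‖c i‖ ^ 2 := pow_pos (norm_pos_iff.mpr hci) 2
      calc (R + ε) ^ 2 * ‖c i‖ ^ 2 < ‖μ i‖ ^ 2 * ‖c i‖ ^ 2 := mul_lt_mul_of_pos_right h1 h2
        _ = ‖c i‖ ^ 2 * ‖μ i‖ ^ 2 := mul_comm _ _
    refine Finset.sum_lt_sum (fun i _ => ?_) ⟨i₀, Finset.mem_univ _, key i₀ hi₀⟩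
    rcases eq_or_ne (c i) 0 with h | h
    · simp [h]
    · exact (key i h).le
  have hlow : (R + ε) * ‖ξ‖ < ‖toEuclideanLin B ξ‖ :=
    lt_of_pow_lt_pow_left₀ 2 (norm_nonneg _) hstrict
  have hBT : ‖toEuclideanLin B ξ‖ = ‖toEuclideanLin Tᴴ ξ‖ := by
    have h1 : ⟪toEuclideanLin B ξ, toEuclideanLin B ξ⟫
        = ⟪toEuclideanLin Tᴴ ξ, toEuclideanLin Tᴴ ξ⟫ := by
      calc ⟪toEuclideanLin B ξ, toEuclideanLin B ξ⟫
          = ⟪toEuclideanLin Bᴴ ξ, toEuclideanLin B ξ⟫ := by rw [hB.isHermitian.eq]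
        _ = ⟪ξ, toEuclideanLin B (toEuclideanLin B ξ)⟫ := adjAux B ξ _
        _ = ⟪ξ, toEuclideanLin (B * B) ξ⟫ := by rw [compAux]; rfl
        _ = ⟪ξ, toEuclideanLin (T * Tᴴ) ξ⟫ := by rw [hBsq]
        _ = ⟪ξ, toEuclideanLin T (toEuclideanLin Tᴴ ξ)⟫ := by rw [compAux]; rfl
        _ = ⟪toEuclideanLin Tᴴ ξ, toEuclideanLin Tᴴ ξ⟫ := (adjAux T ξ _).symm
    rw [inner_self_eq_norm_sq_to_K, inner_self_eq_norm_sq_to_K] at h1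
    have h2 : ‖toEuclideanLin B ξ‖ ^ 2 = ‖toEuclideanLin Tᴴ ξ‖ ^ 2 := by exact_mod_cast h1
    have := congrArg Real.sqrt h2
    rwa [Real.sqrt_sq (norm_nonneg _), Real.sqrt_sq (norm_nonneg _)] at this
  have hTd : Tᴴ = (T - Y)ᴴ + Yᴴ := by rw [← conjTranspose_add, sub_add_cancel]
  have hsplit : toEuclideanLin Tᴴ ξ = toEuclideanLin (T - Y)ᴴ ξ + toEuclideanLin Yᴴ ξ := by
    rw [hTd, map_add]; rfl
  have hfirst : ‖toEuclideanLin (T - Y)ᴴ ξ‖ ≤ ε * ‖ξ‖ := by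
    have he : toEuclideanLin (T - Y)ᴴ ξ = toEuclideanLin ((T - Y)ᴴ * Q) ξ := by
      rw [compAux, LinearMap.comp_apply, hQξ]
    have hn : ‖(T - Y)ᴴ * Q‖ = ‖Q * (T - Y)‖ := by
      have : (T - Y)ᴴ * Q = (Q * (T - Y))ᴴ := by rw [conjTranspose_mul, hQher.eq]
      rw [this, Matrix.l2_opNorm_conjTranspose]
    calc ‖toEuclideanLin (T - Y)ᴴ ξ‖ = ‖toEuclideanLin ((T - Y)ᴴ * Q) ξ‖ := by rw [he]
      _ ≤ ‖(T - Y)ᴴ * Q‖ * ‖ξ‖ := opAux _ _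
      _ = ‖Q * (T - Y)‖ * ‖ξ‖ := by rw [hn]
      _ ≤ ε * ‖ξ‖ := mul_le_mul_of_nonneg_right hQT (norm_nonneg _)
  have hsecond : ‖toEuclideanLin Yᴴ ξ‖ ≤ R * ‖ξ‖ := by
    calc ‖toEuclideanLin Yᴴ ξ‖ ≤ ‖Yᴴ‖ * ‖ξ‖ := opAux _ _
      _ = R * ‖ξ‖ := by rw [Matrix.l2_opNorm_conjTranspose]
  have hupper : ‖toEuclideanLin Tᴴ ξ‖ ≤ (R + ε) * ‖ξ‖ := by
    calc ‖toEuclideanLin Tᴴ ξ‖ ≤ ‖toEuclideanLin (T - Y)ᴴ ξ‖ + ‖toEuclideanLin Yᴴ ξ‖ := by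
          rw [hsplit]; exact norm_add_le _ _
      _ ≤ ε * ‖ξ‖ + R * ‖ξ‖ := add_le_add hfirst hsecond
      _ = (R + ε) * ‖ξ‖ := by ring
  rw [hBT] at hlow
  linarith

end
end Stmt11Aux

open Stmt11Aux Module

/-- Given `T, Y ∈ M_k(ℂ)`, `R = ‖Y‖_∞`, and a projection `Q` with
`‖Q(T−Y)‖_∞ ≤ ε` and `tr(1−Q) ≤ ε`, there is a projection `P` under the spectral
projection `χ_{[0,R+ε]}(|T^*|)` with `tr(1−P) ≤ 2ε` and `‖P(T−Y)‖_∞ ≤ ε`. -/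
theorem stmt11 (k : ℕ) (hk : 1 ≤ k) (T Y : Matrix (Fin k) (Fin k) ℂ) (ε : ℝ) (hε : 0 < ε)
    (Q : Matrix (Fin k) (Fin k) ℂ) (hQher : Q.IsHermitian) (hQidem : Q * Q = Q)
    (hQT : ‖Q * (T - Y)‖ ≤ ε) (hQtr : normTraceR (1 - Q) ≤ ε)
    (B : Matrix (Fin k) (Fin k) ℂ) (hB : B.PosSemidef) (hBsq : B * B = T * Tᴴ) :
    ∃ P : Matrix (Fin k) (Fin k) ℂ, P.IsHermitian ∧ P * P = P ∧
      LinearMap.range (Matrix.toLin' P) ≤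
        LinearMap.range (Matrix.toLin' (specProj hB.isHermitian (Set.Icc 0 (‖Y‖ + ε)))) ∧
      normTraceR (1 - P) ≤ 2 * ε ∧ ‖P * (T - Y)‖ ≤ ε := by
  classical
  set E := specProj hB.isHermitian (Set.Icc 0 (‖Y‖ + ε)) with hE
  have hEidem : E * E = E := specProj_idem _ _
  set SQ := LinearMap.range (toEuclideanLin Q) with hSQ
  set SE := LinearMap.range (toEuclideanLin E) with hSE
  set W := SQ ⊓ SE with hWdef
  set P := pm W with hP
  have hPW : ∀ x, toEuclideanLin P x ∈ W := by
    intro x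
    rw [hP, pm_apply]
    exact (W.orthogonalProjectionOnto x).2
  have hEP : E * P = P := by
    apply (toEuclideanLin (𝕜 := ℂ) (m := Fin k) (n := Fin k)).injective
    rw [compAux]
    refine LinearMap.ext fun x => ?_
    exact fixAux hEidem ((hWdef ▸ hPW x).2)
  have hQP : Q * P = P := by
    apply (toEuclideanLin (𝕜 := ℂ) (m := Fin k) (n := Fin k)).injective
    rw [compAux]
    refine LinearMap.ext fun x => ?_
    exact fixAux hQidem ((hWdef ▸ hPW x).1)
  have hPherm : P.IsHermitian := pm_herm W
  have hPQ : P * Q = P := by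
    have h := congrArg conjTranspose hQP
    rwa [conjTranspose_mul, hPherm.eq, hQher.eq] at h
  refine ⟨P, hPherm, pm_idem W, ?_, ?_, ?_⟩
  · rintro y ⟨x, rfl⟩
    refine ⟨Matrix.toLin' P x, ?_⟩
    have := congrArg (fun M => Matrix.toLin' M x) hEP
    simpa [Matrix.toLin'_mul] using this
  · -- trace bound
    have hk0 : (0 : ℝ) < k := by exact_mod_cast hk
    set r := finrank ℂ SQ with hr
    set w := finrank ℂ W with hw
    set s := finrank ℂ SE with hs
    set m := finrank ℂ (LinearMap.ker (toEuclideanLin E)) with hm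
    have hfin : finrank ℂ (EuclideanSpace ℂ (Fin k)) = k := by
      simp [finrank_euclideanSpace]
    have hker : LinearMap.ker (toEuclideanLin E) ⊓ SQ = ⊥ := by
      rw [Submodule.eq_bot_iff]
      rintro x ⟨hx1, hx2⟩
      exact keyDisjoint T Y B Q ε hε hB hBsq hQher hQT x (LinearMap.mem_ker.mp hx1)
        (fixAux hQidem hx2)
    have h1 : s + m = k := by
      rw [hs, hm, LinearMap.finrank_range_add_finrank_ker, hfin]
    have h2 : m + r ≤ k := by
      have h := Submodule.finrank_sup_add_finrank_inf_eq (LinearMap.ker (toEuclideanLin E)) SQ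
      rw [hker] at h
      simp only [finrank_bot, add_zero] at h
      calc m + r = finrank ℂ ↥(LinearMap.ker (toEuclideanLin E) ⊔ SQ) := h.symm
        _ ≤ finrank ℂ (EuclideanSpace ℂ (Fin k)) := Submodule.finrank_le _
        _ = k := hfin
    have h3 : r + s ≤ w + k := by
      have h := Submodule.finrank_sup_add_finrank_inf_eq SQ SE
      have hle : finrank ℂ ↥(SQ ⊔ SE) ≤ k := le_trans (Submodule.finrank_le _) (le_of_eq hfin)
      have hWinf : finrank ℂ ↥(SQ ⊓ SE) = w := by rw [hw]
      omega
    have hQtrace : Q.trace = (r : ℂ) := traceProjAux hQidem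
    have hPtrace : P.trace = (w : ℂ) := by
      rw [hP, traceProjAux (pm_idem W), pm_range]
    have hQnum : ((k : ℝ) - r) / k ≤ ε := by
      have : normTraceR (1 - Q) = ((k : ℝ) - r) / k := by
        rw [normTraceR, Matrix.trace_sub, Matrix.trace_one, hQtrace]
        simp [Complex.sub_re]
      rwa [this] at hQtr
    have hgoal : normTraceR (1 - P) = ((k : ℝ) - w) / k := by
      rw [normTraceR, Matrix.trace_sub, Matrix.trace_one, hPtrace]
      simp [Complex.sub_re]
    rw [hgoal]
    rw [div_le_iff₀ hk0]
    have hQnum' : (k : ℝ) - r ≤ ε * k := by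
      rw [div_le_iff₀ hk0] at hQnum
      linarith
    have hcast : (r : ℝ) + s ≤ w + k := by exact_mod_cast h3
    have hcast1 : (s : ℝ) + m = k := by exact_mod_cast h1
    have hcast2 : (m : ℝ) + r ≤ k := by exact_mod_cast h2
    linarith
  · calc ‖P * (T - Y)‖ = ‖P * (Q * (T - Y))‖ := by rw [← Matrix.mul_assoc, hPQ]
      _ ≤ ‖P‖ * ‖Q * (T - Y)‖ := Matrix.l2_opNorm_mul _ _
      _ ≤ 1 * ε := mul_le_mul (pm_norm W) hQT (norm_nonneg _) zero_le_one
      _ = ε := one_mul ε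
end

section
/- Let k ≥ 1, let T, Y ∈ M_k(ℂ) with ‖Y‖_∞ ≤ R, let ε > 0, and let Q ∈ M_k(ℂ) be an orthogonal projection with ‖Q(T−Y)‖_∞ ≤ ε. Then the range of the spectral projection χ_{(R+ε,∞)}(|T*|) intersects the range of Q trivially: χ_{(R+ε,∞)}(|T*|)(ℂ^k) ∩ Q(ℂ^k) = {0}. Consequently, rank(1 − χ_{[0,R+ε]}(|T*|)) ≤ rank(1−Q). -/
open Matrix
open scoped Matrix.Norms.L2Operator ComplexOrder

/-- The canonical map to Euclidean space. -/
noncomputable def toE {k : ℕ} (v : Fin k → ℂ) : EuclideanSpace ℂ (Fin k) :=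
  (EuclideanSpace.equiv (Fin k) ℂ).symm v

lemma toE_norm_sq {k : ℕ} (v : Fin k → ℂ) :
    ‖toE v‖ ^ 2 = ∑ i, ‖v i‖ ^ 2 := by
  rw [EuclideanSpace.norm_eq]
  exact Real.sq_sqrt (Finset.sum_nonneg fun i _ => sq_nonneg _)

lemma toE_mulVec_norm_le {k : ℕ} (A : Matrix (Fin k) (Fin k) ℂ) (v : Fin k → ℂ) :
    ‖toE (A *ᵥ v)‖ ≤ ‖A‖ * ‖toE v‖ :=
  A.l2_opNorm_mulVec (toE v)

lemma sum_normsq_eq_re_dot {k : ℕ} (v : Fin k → ℂ) :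
    ∑ i, ‖v i‖ ^ 2 = (star v ⬝ᵥ v).re := by
  simp only [dotProduct, Pi.star_apply, Complex.re_sum]
  congr 1
  ext i
  rw [Complex.star_def, ← Complex.normSq_eq_conj_mul_self]
  simp [Complex.normSq_eq_norm_sq, ← Complex.ofReal_pow]

lemma sum_normsq_mulVec {k : ℕ} (M : Matrix (Fin k) (Fin k) ℂ) (v : Fin k → ℂ) :
    ∑ i, ‖(M *ᵥ v) i‖ ^ 2 = (star v ⬝ᵥ (Mᴴ * M) *ᵥ v).re := by
  rw [sum_normsq_eq_re_dot]
  congr 1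
  rw [star_mulVec, dotProduct_mulVec, dotProduct_mulVec, vecMul_vecMul]

/-- If `‖Y‖_∞ ≤ R` and `Q` is a projection with `‖Q(T−Y)‖_∞ ≤ ε`, then the range of
`χ_{(R+ε,∞)}(|T^*|)` meets the range of `Q` trivially, and
`rank(1 − χ_{[0,R+ε]}(|T^*|)) ≤ rank(1−Q)`. -/
theorem stmt12 (k : ℕ) (hk : 1 ≤ k) (T Y : Matrix (Fin k) (Fin k) ℂ) (R ε : ℝ)
    (hY : ‖Y‖ ≤ R) (hε : 0 < ε)
    (Q : Matrix (Fin k) (Fin k) ℂ) (hQher : Q.IsHermitian) (hQidem : Q * Q = Q)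
    (hQT : ‖Q * (T - Y)‖ ≤ ε)
    (B : Matrix (Fin k) (Fin k) ℂ) (hB : B.PosSemidef) (hBsq : B * B = T * Tᴴ) :
    LinearMap.range (Matrix.toLin' (specProj hB.isHermitian (Set.Ioi (R + ε)))) ⊓
        LinearMap.range (Matrix.toLin' Q) = ⊥ ∧
      (1 - specProj hB.isHermitian (Set.Icc 0 (R + ε))).rank ≤ (1 - Q).rank := by
  have hR : 0 ≤ R := le_trans (norm_nonneg Y) hY
  have hRε : 0 ≤ R + ε := by linarith
  set hH := hB.isHermitian with hHdef
  set U : Matrix (Fin k) (Fin k) ℂ := (hH.eigenvectorUnitary : Matrix (Fin k) (Fin k) ℂ)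
    with hU
  have hU1 : star U * U = 1 := (Unitary.mem_iff.mp hH.eigenvectorUnitary.2).1
  have hU2 : U * star U = 1 := (Unitary.mem_iff.mp hH.eigenvectorUnitary.2).2
  set μ := hH.eigenvalues with hμ
  have hμ0 : ∀ i, 0 ≤ μ i := fun i => hB.eigenvalues_nonneg i
  -- Part 1
  have part1 : LinearMap.range (Matrix.toLin' (specProj hH (Set.Ioi (R + ε)))) ⊓
      LinearMap.range (Matrix.toLin' Q) = ⊥ := by
    rw [eq_bot_iff]
    rintro v ⟨⟨w, hw⟩, ⟨u, hu⟩⟩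
    simp only [Matrix.toLin'_apply] at hw hu
    by_contra hv0
    rw [Submodule.mem_bot] at hv0
    -- Qv = v
    have hQv : Q *ᵥ v = v := by
      rw [← hu, Matrix.mulVec_mulVec, hQidem]
    -- coordinates
    set c := star U *ᵥ v with hc
    have hU2' : U * Uᴴ = 1 := by rw [← Matrix.star_eq_conjTranspose]; exact hU2
    have hcv : ∑ i, ‖c i‖ ^ 2 = ∑ i, ‖v i‖ ^ 2 := by
      rw [hc, sum_normsq_mulVec, Matrix.star_eq_conjTranspose, conjTranspose_conjTranspose,
        hU2', Matrix.one_mulVec, sum_normsq_eq_re_dot]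
    -- c i = 0 for small eigenvalues
    have hcz : ∀ i, μ i ∉ Set.Ioi (R + ε) → c i = 0 := by
      intro i hi
      have hPU : star U * specProj hH (Set.Ioi (R + ε)) =
          Matrix.diagonal
            (fun i => Set.indicator (Set.Ioi (R + ε)) (fun _ => (1 : ℂ)) (μ i)) * star U := by
        simp only [specProj, ← hU, ← hμ]
        rw [← mul_assoc, ← mul_assoc, hU1, one_mul]
      have : c = Matrix.diagonal
          (fun i => Set.indicator (Set.Ioi (R + ε)) (fun _ => (1 : ℂ)) (μ i)) *ᵥ
          (star U *ᵥ w) := by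
        rw [hc, ← hw, Matrix.mulVec_mulVec, Matrix.mulVec_mulVec, hPU]
      rw [this, Matrix.mulVec_diagonal, Set.indicator_of_notMem hi, zero_mul]
    -- ‖Bv‖² in coordinates
    have hBv : ∑ i, ‖(B *ᵥ v) i‖ ^ 2 = ∑ i, (μ i) ^ 2 * ‖c i‖ ^ 2 := by
      have hBdec : B *ᵥ v = U *ᵥ ((Matrix.diagonal (RCLike.ofReal ∘ μ)) *ᵥ c) := by
        rw [hc, Matrix.mulVec_mulVec, Matrix.mulVec_mulVec]
        conv_lhs => rw [hH.spectral_theorem, Unitary.conjStarAlgAut_apply]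
      have hU1' : Uᴴ * U = 1 := by rw [← Matrix.star_eq_conjTranspose]; exact hU1
      rw [hBdec, sum_normsq_mulVec, hU1', Matrix.one_mulVec, ← sum_normsq_eq_re_dot]
      congr 1
      ext i
      rw [Matrix.mulVec_diagonal]
      simp only [Function.comp_apply, norm_mul, mul_pow, RCLike.norm_ofReal]
      rw [sq_abs]
    -- ‖Bv‖ = ‖Tᴴv‖
    have hBT : ∑ i, ‖(B *ᵥ v) i‖ ^ 2 = ∑ i, ‖(Tᴴ *ᵥ v) i‖ ^ 2 := by
      rw [sum_normsq_mulVec, sum_normsq_mulVec, hB.isHermitian.eq,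
        conjTranspose_conjTranspose, hBsq]
    -- upper bound
    have hTv : ‖toE (Tᴴ *ᵥ v)‖ ≤ (R + ε) * ‖toE v‖ := by
      have hdec : Tᴴ *ᵥ v = (Q * (T - Y))ᴴ *ᵥ v + Yᴴ *ᵥ v := by
        rw [Matrix.conjTranspose_mul, Matrix.conjTranspose_sub, hQher.eq,
          ← Matrix.mulVec_mulVec, hQv, Matrix.sub_mulVec, sub_add_cancel]
      have htoE : toE (Tᴴ *ᵥ v) = toE ((Q * (T - Y))ᴴ *ᵥ v) + toE (Yᴴ *ᵥ v) := by
        rw [hdec]; rfl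
      calc ‖toE (Tᴴ *ᵥ v)‖ ≤ ‖toE ((Q * (T - Y))ᴴ *ᵥ v)‖ + ‖toE (Yᴴ *ᵥ v)‖ := by
              rw [htoE]; exact norm_add_le _ _
        _ ≤ ‖(Q * (T - Y))ᴴ‖ * ‖toE v‖ + ‖Yᴴ‖ * ‖toE v‖ :=
              add_le_add (toE_mulVec_norm_le _ _) (toE_mulVec_norm_le _ _)
        _ ≤ ε * ‖toE v‖ + R * ‖toE v‖ := by
              rw [Matrix.l2_opNorm_conjTranspose, Matrix.l2_opNorm_conjTranspose]
              exact add_le_add (mul_le_mul_of_nonneg_right hQT (norm_nonneg _))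
                (mul_le_mul_of_nonneg_right hY (norm_nonneg _))
        _ = (R + ε) * ‖toE v‖ := by ring
    have hub : ∑ i, (μ i) ^ 2 * ‖c i‖ ^ 2 ≤ (R + ε) ^ 2 * ∑ i, ‖c i‖ ^ 2 := by
      have h1 : ∑ i, ‖(Tᴴ *ᵥ v) i‖ ^ 2 ≤ ((R + ε) * ‖toE v‖) ^ 2 := by
        rw [← toE_norm_sq]
        exact pow_le_pow_left₀ (norm_nonneg _) hTv 2
      rw [← hBv, hBT]
      calc ∑ i, ‖(Tᴴ *ᵥ v) i‖ ^ 2 ≤ ((R + ε) * ‖toE v‖) ^ 2 := h1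
        _ = (R + ε) ^ 2 * ‖toE v‖ ^ 2 := by ring
        _ = (R + ε) ^ 2 * ∑ i, ‖c i‖ ^ 2 := by rw [toE_norm_sq, hcv]
    -- strict lower bound
    have hex : ∃ i, c i ≠ 0 := by
      by_contra h
      push_neg at h
      apply hv0
      have : star U *ᵥ v = 0 := funext h
      have := congrArg (fun x => U *ᵥ x) this
      simpa [Matrix.mulVec_mulVec, hU2] using this
    obtain ⟨i₀, hi₀⟩ := hex
    have hμi₀ : μ i₀ ∈ Set.Ioi (R + ε) := by
      by_contra h; exact hi₀ (hcz i₀ h)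
    have hlb : (R + ε) ^ 2 * ∑ i, ‖c i‖ ^ 2 < ∑ i, (μ i) ^ 2 * ‖c i‖ ^ 2 := by
      rw [Finset.mul_sum]
      apply Finset.sum_lt_sum
      · intro i _
        by_cases h : c i = 0
        · simp [h]
        · have : μ i ∈ Set.Ioi (R + ε) := by
            by_contra hh; exact h (hcz i hh)
          have : (R + ε) ^ 2 ≤ (μ i) ^ 2 :=
            pow_le_pow_left₀ hRε (le_of_lt this) 2
          exact mul_le_mul_of_nonneg_right this (sq_nonneg _)
      · refine ⟨i₀, Finset.mem_univ i₀, ?_⟩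
        have h1 : (R + ε) ^ 2 < (μ i₀) ^ 2 := by
          apply sq_lt_sq' <;> nlinarith [Set.mem_Ioi.mp hμi₀]
        have h2 : 0 < ‖c i₀‖ ^ 2 := pow_pos (norm_pos_iff.mpr hi₀) 2
        exact mul_lt_mul_of_pos_right h1 h2
    exact absurd hub (not_le.mpr hlb)
  refine ⟨part1, ?_⟩
  -- Part 2: matrix identity
  have hmat : 1 - specProj hH (Set.Icc 0 (R + ε)) = specProj hH (Set.Ioi (R + ε)) := by
    have h1 : (1 : Matrix (Fin k) (Fin k) ℂ) = U * 1 * star U := by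
      rw [mul_one, hU2]
    simp only [specProj, ← hU, ← hμ]
    have hfun : (fun i => 1 - Set.indicator (Set.Icc 0 (R + ε)) (fun _ => (1 : ℂ)) (μ i)) =
        (fun i => Set.indicator (Set.Ioi (R + ε)) (fun _ => (1 : ℂ)) (μ i)) := by
      funext i
      by_cases h : μ i ≤ R + ε
      · rw [Set.indicator_of_mem (Set.mem_Icc.mpr ⟨hμ0 i, h⟩), Set.indicator_of_notMem
          (Set.notMem_Ioi.mpr h)]
        ring
      · push_neg at h
        rw [Set.indicator_of_notMem (fun hh => absurd (Set.mem_Icc.mp hh).2 (not_le.mpr h)),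
          Set.indicator_of_mem (Set.mem_Ioi.mpr h)]
        ring
    rw [h1, ← Matrix.sub_mul, ← Matrix.mul_sub, ← Matrix.diagonal_one, Matrix.diagonal_sub,
      hfun]
  rw [hmat]
  -- rank inequality
  set P := specProj hH (Set.Ioi (R + ε)) with hP
  have hinter : LinearMap.range P.mulVecLin ⊓ LinearMap.range Q.mulVecLin = ⊥ := by
    rw [← Matrix.toLin'_apply' P, ← Matrix.toLin'_apply' Q]
    exact part1
  unfold Matrix.rank
  set L : LinearMap.range P.mulVecLin →ₗ[ℂ] (Fin k → ℂ) :=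
    (1 - Q).mulVecLin.comp (LinearMap.range P.mulVecLin).subtype with hL
  have hLinj : Function.Injective L := by
    rw [← LinearMap.ker_eq_bot, eq_bot_iff]
    rintro ⟨v, hv⟩ hkv
    simp only [LinearMap.mem_ker, hL, LinearMap.comp_apply, Submodule.subtype_apply,
      Matrix.mulVecLin_apply, Matrix.sub_mulVec, Matrix.one_mulVec, sub_eq_zero] at hkv
    have hvQ : v ∈ LinearMap.range Q.mulVecLin := ⟨v, hkv.symm⟩
    have : v ∈ LinearMap.range P.mulVecLin ⊓ LinearMap.range Q.mulVecLin := ⟨hv, hvQ⟩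
    rw [hinter, Submodule.mem_bot] at this
    simpa [Submodule.mk_eq_zero] using this
  have hrange : LinearMap.range L ≤ LinearMap.range (1 - Q).mulVecLin := by
    rintro x ⟨⟨v, hv⟩, rfl⟩
    exact ⟨v, rfl⟩
  calc Module.finrank ℂ (LinearMap.range P.mulVecLin)
      = Module.finrank ℂ (LinearMap.range L) := (LinearMap.finrank_range_of_inj hLinj).symm
    _ ≤ Module.finrank ℂ (LinearMap.range (1 - Q).mulVecLin) := Submodule.finrank_mono hrange
end

section
/- Let (M,τ) be a tracial von Neumann algebra, N ⊆ M a von Neumann subalgebra, and define the singular subspace H_s(N ⊆ M) = {ξ ∈ L²(M) : L²(NξN) is disjoint from L²(N) ⊗ L²(N^op) as an N-N bimodule}. Then H_s(N ⊆ M) is a closed linear subspace of L²(M,τ) which is invariant under left and right multiplication by elements of N; indeed, H_s(N ⊆ M) equals the intersection of the kernels of all bounded N-N bimodular maps T : L²(M) → L²(N) ⊗ L²(N^op). -/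
open Filter MulOpposite

/-- Let `(M,τ)` be a tracial von Neumann algebra and `N ⊆ M` a subalgebra.  The singular
subspace `H_s(N ⊆ M) = {ξ ∈ L²(M) : L²(NξN)` is disjoint from the coarse `N`-`N`
bimodule `}` is a closed subspace of `L²(M)` invariant under left and right
multiplication by `N`, and it equals the intersection of the kernels of all bounded
`N`-`N` bimodular maps `L²(M) → L²(N) ⊗ L²(N^op)`.

Modeling: `B` is a C*-algebra (`M`) with an injective unital embedding `ι : A → B` of
the subalgebra `N = A`, acting on `H = L²(M,τ)` by commuting left/right actions `L`, `R`
with cyclic trace vector `Ω`.  For `ξ ∈ H`, `Sub ξ = L²(NξN)` is the closed span of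
`{x ξ y : x, y ∈ N}`, and `E` together with `t : K → K → E` (where `K = L²(N)` is the
closure of `NΩ`) is the coarse bimodule `L²(N) ⊗ L²(N^op)` with actions `Lc`, `Rc`. -/
theorem stmt19 {A B H E : Type*}
    [NormedRing A] [StarRing A] [CStarRing A] [NormedAlgebra ℂ A]
    [NormedRing B] [StarRing B] [CStarRing B] [NormedAlgebra ℂ B]
    [NormedAddCommGroup H] [InnerProductSpace ℂ H] [CompleteSpace H]
    [NormedAddCommGroup E] [InnerProductSpace ℂ E] [CompleteSpace E]
    (ι : A →⋆ₐ[ℂ] B) (hι : Function.Injective ι)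
    (L : B →⋆ₐ[ℂ] (H →L[ℂ] H)) (R : Bᵐᵒᵖ →⋆ₐ[ℂ] (H →L[ℂ] H))
    (hLR : ∀ (x : B) (y : Bᵐᵒᵖ), (L x).comp (R y) = (R y).comp (L x))
    (Ω : H)
    (hcyc : (Submodule.span ℂ {ξ : H | ∃ b : B, ξ = L b Ω}).topologicalClosure = ⊤)
    (htrvec : ∀ b : B, L b Ω = R (op b) Ω)
    (htrace : ∀ x y : B, (inner ℂ (L (x * y) Ω) Ω : ℂ) = (inner ℂ (L (y * x) Ω) Ω : ℂ))
    -- `K = L²(N)` and the coarse bimodule `E = L²(N) ⊗ L²(N^op)`: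
    (K : Submodule ℂ H)
    (hK : K = (Submodule.span ℂ {ξ : H | ∃ a : A, ξ = L (ι a) Ω}).topologicalClosure)
    (hKL : ∀ (a : A) (ξ : H), ξ ∈ K → L (ι a) ξ ∈ K)
    (hKR : ∀ (a : A) (ξ : H), ξ ∈ K → R (op (ι a)) ξ ∈ K)
    (t : K → K → E)
    (htinner : ∀ ξ ξ' η η' : K,
      (inner ℂ (t ξ η) (t ξ' η') : ℂ) =
        (inner ℂ (ξ : H) (ξ' : H) : ℂ) * (inner ℂ (η : H) (η' : H) : ℂ))
    (htdense : (Submodule.span ℂ {z : E | ∃ ξ η, z = t ξ η}).topologicalClosure = ⊤)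
    (Lc : A →⋆ₐ[ℂ] (E →L[ℂ] E)) (Rc : Aᵐᵒᵖ →⋆ₐ[ℂ] (E →L[ℂ] E))
    (hLc : ∀ (a : A) (ξ η : K), Lc a (t ξ η) = t ⟨L (ι a) ξ, hKL a ξ ξ.2⟩ η)
    (hRc : ∀ (a : A) (ξ η : K), Rc (op a) (t ξ η) = t ξ ⟨R (op (ι a)) η, hKR a η η.2⟩)
    -- `Sub ξ = L²(NξN)`:
    (Sub : H → Submodule ℂ H)
    (hSub : ∀ ξ : H, Sub ξ = (Submodule.span ℂ
      {η : H | ∃ x y : A, η = L (ι x) (R (op (ι y)) ξ)}).topologicalClosure)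
    (hSL : ∀ (ξ : H) (a : A) (η : H), η ∈ Sub ξ → L (ι a) η ∈ Sub ξ)
    (hSR : ∀ (ξ : H) (a : A) (η : H), η ∈ Sub ξ → R (op (ι a)) η ∈ Sub ξ) :
    -- the singular subspace: ξ such that every bounded N-N bimodular map
    -- L²(NξN) → L²(N)⊗L²(N^op) vanishes
    let Hs : Set H := {ξ : H | ∀ T : (Sub ξ) →L[ℂ] E,
      (∀ (a : A) (η : Sub ξ), T ⟨L (ι a) η, hSL ξ a η η.2⟩ = Lc a (T η)) →
      (∀ (a : A) (η : Sub ξ), T ⟨R (op (ι a)) η, hSR ξ a η η.2⟩ = Rc (op a) (T η)) →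
      T = 0}
    -- Hs is a closed N-N invariant subspace of L²(M), and equals the intersection of
    -- the kernels of all bounded N-N bimodular maps L²(M) → L²(N)⊗L²(N^op)
    (∃ W : Submodule ℂ H, (W : Set H) = Hs ∧ IsClosed (W : Set H)) ∧
    (∀ a : A, ∀ ξ ∈ Hs, L (ι a) ξ ∈ Hs ∧ R (op (ι a)) ξ ∈ Hs) ∧
    Hs = ⋂ T ∈ {T : H →L[ℂ] E |
        (∀ a : A, T.comp (L (ι a)) = (Lc a).comp T) ∧
        (∀ a : A, T.comp (R (op (ι a))) = (Rc (op a)).comp T)},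
      T ⁻¹' {0} := by
  intro Hs
  classical
  -- ξ belongs to Sub ξ
  have hmemSub : ∀ ξ : H, ξ ∈ Sub ξ := by
    intro ξ
    rw [hSub]
    refine Submodule.le_topologicalClosure _ (Submodule.subset_span ?_)
    exact ⟨1, 1, by simp⟩
  have hclosedSub : ∀ ξ : H, IsClosed ((Sub ξ : Submodule ℂ H) : Set H) := by
    intro ξ; rw [hSub]; exact Submodule.isClosed_topologicalClosure _
  -- main characterization
  have hmain : Hs = ⋂ T ∈ {T : H →L[ℂ] E |
        (∀ a : A, T.comp (L (ι a)) = (Lc a).comp T) ∧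
        (∀ a : A, T.comp (R (op (ι a))) = (Rc (op a)).comp T)},
      T ⁻¹' {0} := by
    ext ξ
    simp only [Hs, Set.mem_setOf_eq, Set.mem_iInter, Set.mem_preimage,
      Set.mem_singleton_iff]
    constructor
    · intro hξ T hT
      have h0 : T.comp (Sub ξ).subtypeL = 0 := by
        refine hξ (T.comp (Sub ξ).subtypeL) ?_ ?_
        · intro a η
          have := DFunLike.congr_fun (hT.1 a) (η : H)
          simpa using this
        · intro a η
          have := DFunLike.congr_fun (hT.2 a) (η : H)
          simpa using this
      have := DFunLike.congr_fun h0 (⟨ξ, hmemSub ξ⟩ : Sub ξ)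
      simpa using this
    · intro hξ S hSLmod hSRmod
      haveI : CompleteSpace (Sub ξ) := (hclosedSub ξ).completeSpace_coe
      set P : H →L[ℂ] (Sub ξ) := (Sub ξ).orthogonalProjectionOnto with hP
      -- projection commutes with the actions
      have hPL : ∀ (a : A) (η : H),
          ((P (L (ι a) η) : Sub ξ) : H) = L (ι a) ((P η : Sub ξ) : H) := by
        intro a η
        refine Submodule.eq_starProjection_of_mem_orthogonal (K := Sub ξ) (u := L (ι a) η)
          (hSL ξ a _ (P η).2) ?_
        rw [Submodule.mem_orthogonal']
        intro w hw
        have hsub : L (ι a) η - L (ι a) ((P η : Sub ξ) : H)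
            = L (ι a) (η - ((P η : Sub ξ) : H)) := by
          simp [map_sub]
        rw [hsub]
        have hadj : (L (ι a)) = ContinuousLinearMap.adjoint (L (ι (star a))) := by
          rw [← ContinuousLinearMap.star_eq_adjoint, ← map_star, ← map_star, star_star]
        calc (inner ℂ (L (ι a) (η - ((P η : Sub ξ) : H))) w : ℂ)
            = inner ℂ (η - ((P η : Sub ξ) : H)) (ContinuousLinearMap.adjoint (L (ι a)) w) := by
              rw [ContinuousLinearMap.adjoint_inner_right]
          _ = 0 := by
              have hmem : ContinuousLinearMap.adjoint (L (ι a)) w ∈ Sub ξ := by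
                rw [← ContinuousLinearMap.star_eq_adjoint, ← map_star, ← map_star]
                exact hSL ξ (star a) w hw
              have horth : η - ((P η : Sub ξ) : H) ∈ (Sub ξ)ᗮ :=
                Submodule.sub_starProjection_mem_orthogonal η
              exact (Submodule.mem_orthogonal' _ _).1 horth _ hmem
      have hPR : ∀ (a : A) (η : H),
          ((P (R (op (ι a)) η) : Sub ξ) : H) = R (op (ι a)) ((P η : Sub ξ) : H) := by
        intro a η
        refine Submodule.eq_starProjection_of_mem_orthogonal (K := Sub ξ) (u := R (op (ι a)) η)
          (hSR ξ a _ (P η).2) ?_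
        rw [Submodule.mem_orthogonal']
        intro w hw
        have hsub : R (op (ι a)) η - R (op (ι a)) ((P η : Sub ξ) : H)
            = R (op (ι a)) (η - ((P η : Sub ξ) : H)) := by
          simp [map_sub]
        rw [hsub]
        calc (inner ℂ (R (op (ι a)) (η - ((P η : Sub ξ) : H))) w : ℂ)
            = inner ℂ (η - ((P η : Sub ξ) : H)) (ContinuousLinearMap.adjoint (R (op (ι a))) w) := by
              rw [ContinuousLinearMap.adjoint_inner_right]
          _ = 0 := by
              have hmem : ContinuousLinearMap.adjoint (R (op (ι a))) w ∈ Sub ξ := by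
                rw [← ContinuousLinearMap.star_eq_adjoint, ← map_star]
                have : star (op (ι a)) = op (ι (star a)) := by
                  rw [map_star ι, MulOpposite.op_star]
                rw [this]
                exact hSR ξ (star a) w hw
              have horth : η - ((P η : Sub ξ) : H) ∈ (Sub ξ)ᗮ :=
                Submodule.sub_starProjection_mem_orthogonal η
              exact (Submodule.mem_orthogonal' _ _).1 horth _ hmem
      -- the global extension
      set T : H →L[ℂ] E := S.comp P with hT
      have hTbi1 : ∀ a : A, T.comp (L (ι a)) = (Lc a).comp T := by
        intro a
        ext η
        have h1 : P (L (ι a) η) = ⟨L (ι a) ((P η : Sub ξ) : H), hSL ξ a _ (P η).2⟩ :=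
          Subtype.ext (hPL a η)
        simp only [hT, ContinuousLinearMap.comp_apply, h1]
        exact hSLmod a (P η)
      have hTbi2 : ∀ a : A, T.comp (R (op (ι a))) = (Rc (op a)).comp T := by
        intro a
        ext η
        have h1 : P (R (op (ι a)) η) = ⟨R (op (ι a)) ((P η : Sub ξ) : H), hSR ξ a _ (P η).2⟩ :=
          Subtype.ext (hPR a η)
        simp only [hT, ContinuousLinearMap.comp_apply, h1]
        exact hSRmod a (P η)
      have hTξ : T ξ = 0 := hξ T ⟨hTbi1, hTbi2⟩
      -- T vanishes on Sub ξ
      have hker : Sub ξ ≤ LinearMap.ker (T : H →ₗ[ℂ] E) := by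
        rw [hSub]
        refine Submodule.topologicalClosure_minimal _ ?_ ?_
        · rw [Submodule.span_le]
          rintro η ⟨x, y, rfl⟩
          have h1 := DFunLike.congr_fun (hTbi1 x) (R (op (ι y)) ξ)
          have h2 := DFunLike.congr_fun (hTbi2 y) ξ
          simp only [ContinuousLinearMap.comp_apply] at h1 h2
          simp only [SetLike.mem_coe, LinearMap.mem_ker, ContinuousLinearMap.coe_coe, h1, h2, hTξ, map_zero]
        · exact ContinuousLinearMap.isClosed_ker T
      have hPξ : ∀ η : Sub ξ, P ((η : H)) = η := fun η =>
        Submodule.orthogonalProjectionOnto_mem_subspace_eq_self η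
      ext η
      have hη0 : T (η : H) = 0 := hker η.2
      simp only [hT, ContinuousLinearMap.comp_apply, hPξ η] at hη0
      simpa using hη0
  have hcoe : ∀ (𝒮 : Set (H →L[ℂ] E)),
      ((⨅ T ∈ 𝒮, LinearMap.ker (T : H →ₗ[ℂ] E) : Submodule ℂ H) : Set H) = ⋂ T ∈ 𝒮, T ⁻¹' {0} := by
    intro 𝒮
    ext ξ
    simp only [SetLike.mem_coe, Submodule.mem_iInf, Set.mem_iInter, Set.mem_preimage,
      Set.mem_singleton_iff, LinearMap.mem_ker, ContinuousLinearMap.coe_coe]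
  refine ⟨?_, ?_, hmain⟩
  · refine ⟨⨅ T ∈ {T : H →L[ℂ] E |
        (∀ a : A, T.comp (L (ι a)) = (Lc a).comp T) ∧
        (∀ a : A, T.comp (R (op (ι a))) = (Rc (op a)).comp T)}, LinearMap.ker (T : H →ₗ[ℂ] E), ?_, ?_⟩
    · rw [hcoe, hmain]
    · rw [hcoe]
      exact isClosed_biInter fun T _ => isClosed_singleton.preimage T.continuous
  · intro a ξ hξ
    rw [hmain] at hξ ⊢
    simp only [Set.mem_iInter, Set.mem_preimage, Set.mem_singleton_iff,
      Set.mem_setOf_eq] at hξ ⊢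
    constructor
    · intro T hT
      have := DFunLike.congr_fun (hT.1 a) ξ
      simp only [ContinuousLinearMap.comp_apply] at this
      rw [this, hξ T hT, map_zero]
    · intro T hT
      have := DFunLike.congr_fun (hT.2 a) ξ
      simp only [ContinuousLinearMap.comp_apply] at this
      rw [this, hξ T hT, map_zero]
end
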